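/- For every type τ (generated by τ ::= χᵢ | τ→σ | τ×σ | τ+σ), the type τ is isomorphic to its exp-log normal form enf(τ): there exist closed lambda terms S : τ → enf(τ) and T : enf(τ) → τ of the simply typed lambda calculus with products and sums such that λx. T (S x) =βη λx. x and λy. S (T y) =βη λy. y. -/

import Mathlib

namespace ExpLog

-- Types generated by atoms, arrows, products and sums
-- (together with the unit type, the empty product).
inductive Ty : Type
  | atom : ℕ → Ty
  | unit : Ty
  | arr  : Ty → Ty → Ty
  | prod : Ty → Ty → Ty
  | sum  : Ty → Ty → Ty
  deriving Repr, DecidableEq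
abbrev Ctx := List Ty

-- Typed de Bruijn indices.
inductive Var : Ctx → Ty → Type
  | vz {Γ A} : Var (A :: Γ) A
  | vs {Γ A B} : Var Γ A → Var (B :: Γ) A

-- Intrinsically typed terms of the lambda calculus with sums, products (and unit).
inductive Tm : Ctx → Ty → Type
  | var  {Γ A} : Var Γ A → Tm Γ A
  | lam  {Γ A B} : Tm (A :: Γ) B → Tm Γ (Ty.arr A B)
  | app  {Γ A B} : Tm Γ (Ty.arr A B) → Tm Γ A → Tm Γ B
  | pair {Γ A B} : Tm Γ A → Tm Γ B → Tm Γ (Ty.prod A B)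
  | fst  {Γ A B} : Tm Γ (Ty.prod A B) → Tm Γ A
  | snd  {Γ A B} : Tm Γ (Ty.prod A B) → Tm Γ B
  | inl  {Γ A B} : Tm Γ A → Tm Γ (Ty.sum A B)
  | inr  {Γ A B} : Tm Γ B → Tm Γ (Ty.sum A B)
  | case {Γ A B C} : Tm Γ (Ty.sum A B) → Tm (A :: Γ) C → Tm (B :: Γ) C → Tm Γ C
  | star {Γ} : Tm Γ Ty.unit

-- Renamings and substitutions.
def Ren (Γ Δ : Ctx) : Type := ∀ A, Var Γ A → Var Δ A

def Ren.lift {Γ Δ A} (ρ : Ren Γ Δ) : Ren (A :: Γ) (A :: Δ) := fun B x =>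
  match x with
  | .vz => .vz
  | .vs y => .vs (ρ B y)

def Tm.rename : ∀ {Γ Δ : Ctx} {A}, Ren Γ Δ → Tm Γ A → Tm Δ A
  | _, _, _, ρ, .var x => .var (ρ _ x)
  | _, _, _, ρ, .lam t => .lam (Tm.rename (Ren.lift ρ) t)
  | _, _, _, ρ, .app t u => .app (Tm.rename ρ t) (Tm.rename ρ u)
  | _, _, _, ρ, .pair t u => .pair (Tm.rename ρ t) (Tm.rename ρ u)
  | _, _, _, ρ, .fst t => .fst (Tm.rename ρ t)
  | _, _, _, ρ, .snd t => .snd (Tm.rename ρ t)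
  | _, _, _, ρ, .inl t => .inl (Tm.rename ρ t)
  | _, _, _, ρ, .inr t => .inr (Tm.rename ρ t)
  | _, _, _, ρ, .case s t u =>
      .case (Tm.rename ρ s) (Tm.rename (Ren.lift ρ) t) (Tm.rename (Ren.lift ρ) u)
  | _, _, _, _, .star => .star

/-- Weakening of a term by one extra hypothesis. -/
def Tm.wk {Γ A B} (t : Tm Γ A) : Tm (B :: Γ) A := Tm.rename (fun _ v => .vs v) t

def Sub (Γ Δ : Ctx) : Type := ∀ A, Var Γ A → Tm Δ A

def Sub.lift {Γ Δ A} (σ : Sub Γ Δ) : Sub (A :: Γ) (A :: Δ) := fun B x =>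
  match x with
  | .vz => .var .vz
  | .vs y => Tm.wk (σ B y)

def Tm.subst : ∀ {Γ Δ : Ctx} {A}, Sub Γ Δ → Tm Γ A → Tm Δ A
  | _, _, _, σ, .var x => σ _ x
  | _, _, _, σ, .lam t => .lam (Tm.subst (Sub.lift σ) t)
  | _, _, _, σ, .app t u => .app (Tm.subst σ t) (Tm.subst σ u)
  | _, _, _, σ, .pair t u => .pair (Tm.subst σ t) (Tm.subst σ u)
  | _, _, _, σ, .fst t => .fst (Tm.subst σ t)
  | _, _, _, σ, .snd t => .snd (Tm.subst σ t)
  | _, _, _, σ, .inl t => .inl (Tm.subst σ t)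
  | _, _, _, σ, .inr t => .inr (Tm.subst σ t)
  | _, _, _, σ, .case s t u =>
      .case (Tm.subst σ s) (Tm.subst (Sub.lift σ) t) (Tm.subst (Sub.lift σ) u)
  | _, _, _, _, .star => .star

/-- Substitution of a single term for de Bruijn index 0. -/
def Sub.single {Γ A} (u : Tm Γ A) : Sub (A :: Γ) Γ := fun B x =>
  match x with
  | .vz => u
  | .vs y => .var y

/-- `t.subst1 u` is `t{u/x}` where `x` is de Bruijn index 0. -/
def Tm.subst1 {Γ A B} (t : Tm (A :: Γ) B) (u : Tm Γ A) : Tm Γ B := Tm.subst (Sub.single u) t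

/-- The substitution `{ι₁ x₁ / x}` (for the top variable of sum type). -/
def Sub.inlTop {Γ A B} : Sub (Ty.sum A B :: Γ) (A :: Γ) := fun C x =>
  match x with
  | .vz => .inl (.var .vz)
  | .vs y => .var (.vs y)

/-- The substitution `{ι₂ x₂ / x}` (for the top variable of sum type). -/
def Sub.inrTop {Γ A B} : Sub (Ty.sum A B :: Γ) (B :: Γ) := fun C x =>
  match x with
  | .vz => .inr (.var .vz)
  | .vs y => .var (.vs y)

/-- Exchange of the two topmost hypotheses. -/
def Ren.swap {Γ A B} : Ren (A :: B :: Γ) (B :: A :: Γ) := fun C x =>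
  match x with
  | .vz => .vs .vz
  | .vs .vz => .vz
  | .vs (.vs y) => .vs (.vs y)

-- The standard equational theory =βη of the lambda calculus with sums
-- (with the eta law for the unit type, the nullary product).
inductive Jeq : ∀ {Γ : Ctx} {A : Ty}, Tm Γ A → Tm Γ A → Prop
  | refl {Γ A} (t : Tm Γ A) : Jeq t t
  | symm {Γ A} {t u : Tm Γ A} : Jeq t u → Jeq u t
  | trans {Γ A} {t u v : Tm Γ A} : Jeq t u → Jeq u v → Jeq t v
  | lam_congr {Γ A B} {t t' : Tm (A :: Γ) B} : Jeq t t' → Jeq (Tm.lam t) (Tm.lam t')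
  | app_congr {Γ A B} {t t' : Tm Γ (Ty.arr A B)} {u u' : Tm Γ A} :
      Jeq t t' → Jeq u u' → Jeq (Tm.app t u) (Tm.app t' u')
  | pair_congr {Γ A B} {t t' : Tm Γ A} {u u' : Tm Γ B} :
      Jeq t t' → Jeq u u' → Jeq (Tm.pair t u) (Tm.pair t' u')
  | fst_congr {Γ A B} {t t' : Tm Γ (Ty.prod A B)} : Jeq t t' → Jeq (Tm.fst t) (Tm.fst t')
  | snd_congr {Γ A B} {t t' : Tm Γ (Ty.prod A B)} : Jeq t t' → Jeq (Tm.snd t) (Tm.snd t')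
  | inl_congr {Γ A B} {t t' : Tm Γ A} : Jeq t t' → Jeq (Tm.inl (B := B) t) (Tm.inl t')
  | inr_congr {Γ A B} {t t' : Tm Γ B} : Jeq t t' → Jeq (Tm.inr (A := A) t) (Tm.inr t')
  | case_congr {Γ A B C} {s s' : Tm Γ (Ty.sum A B)} {t t' : Tm (A :: Γ) C} {u u' : Tm (B :: Γ) C} :
      Jeq s s' → Jeq t t' → Jeq u u' → Jeq (Tm.case s t u) (Tm.case s' t' u')
  | beta_arr {Γ A B} (t : Tm (A :: Γ) B) (u : Tm Γ A) :
      Jeq (Tm.app (Tm.lam t) u) (Tm.subst1 t u)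
  | beta_fst {Γ A B} (t : Tm Γ A) (u : Tm Γ B) : Jeq (Tm.fst (Tm.pair t u)) t
  | beta_snd {Γ A B} (t : Tm Γ A) (u : Tm Γ B) : Jeq (Tm.snd (Tm.pair t u)) u
  | beta_inl {Γ A B C} (m : Tm Γ A) (n₁ : Tm (A :: Γ) C) (n₂ : Tm (B :: Γ) C) :
      Jeq (Tm.case (Tm.inl m) n₁ n₂) (Tm.subst1 n₁ m)
  | beta_inr {Γ A B C} (m : Tm Γ B) (n₁ : Tm (A :: Γ) C) (n₂ : Tm (B :: Γ) C) :
      Jeq (Tm.case (Tm.inr m) n₁ n₂) (Tm.subst1 n₂ m)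
  | eta_arr {Γ A B} (t : Tm Γ (Ty.arr A B)) :
      Jeq t (Tm.lam (Tm.app (Tm.wk t) (Tm.var .vz)))
  | eta_prod {Γ A B} (t : Tm Γ (Ty.prod A B)) : Jeq t (Tm.pair (Tm.fst t) (Tm.snd t))
  | eta_sum {Γ A B C} (n : Tm (Ty.sum A B :: Γ) C) (m : Tm Γ (Ty.sum A B)) :
      Jeq (Tm.subst1 n m)
          (Tm.case m (Tm.subst Sub.inlTop n) (Tm.subst Sub.inrTop n))
  | eta_unit {Γ} (t : Tm Γ Ty.unit) : Jeq t Tm.star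

/-- Type isomorphism: a pair of closed coercions whose compositions are βη-equal
to the identity. -/
def Iso (τ σ : Ty) : Prop :=
  ∃ (M : Tm [] (Ty.arr σ τ)) (N : Tm [] (Ty.arr τ σ)),
    Jeq (Tm.lam (Tm.app (Tm.wk M) (Tm.app (Tm.wk N) (Tm.var .vz))))
        (Tm.lam (Tm.var .vz)) ∧
    Jeq (Tm.lam (Tm.app (Tm.wk N) (Tm.app (Tm.wk M) (Tm.var .vz))))
        (Tm.lam (Tm.var .vz))
-- The mutually inductive grammar of exp-log normal forms:
-- conjunctive normal forms (CNF), disjunctive normal forms (DNF), and base types.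
mutual
inductive CNF : Type
  | top : CNF
  | con : CNF → Base → CNF → CNF
  deriving Repr

inductive DNF : Type
  | two : CNF → CNF → DNF
  | dis : CNF → DNF → DNF
  deriving Repr

inductive Base : Type
  | prp : ℕ → Base
  | bd  : DNF → Base
  deriving Repr
end

/-- Exp-log normal forms: either a CNF or a DNF. -/
inductive ENF : Type
  | cnf : CNF → ENF
  | dnf : DNF → ENF
  deriving Repr

/-- Flattening of `+`-associativity (auxiliary). -/
def nplus1 : DNF → ENF → DNF
  | .two c c0, .cnf c1 => .dis c (.two c0 c1)
  | .two c c0, .dnf d0 => .dis c (.dis c0 d0)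
  | .dis c d0, e2 => .dis c (nplus1 d0 e2)

/-- Flattened n-ary sum of two ENFs. -/
def nplus : ENF → ENF → DNF
  | .cnf a, .cnf c => .two a c
  | .cnf a, .dnf d => .dis a d
  | .dnf b, e2 => nplus1 b e2

/-- Flattened n-ary product of two CNFs. -/
def ntimes : CNF → CNF → CNF
  | .top, c2 => c2
  | .con c10 d c13, c2 => .con c10 d (ntimes c13 c2)

/-- Distributivity of a CNF over a DNF. -/
def distrib0 : CNF → DNF → ENF
  | c, .two c0 c1 => .dnf (.two (ntimes c c0) (ntimes c c1))
  | c, .dis c0 d0 =>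
      .dnf (match distrib0 c d0 with
            | .cnf c1 => .two (ntimes c c0) c1
            | .dnf d1 => .dis (ntimes c c0) d1)

/-- Distributivity of a CNF over an ENF. -/
def distrib1 : CNF → ENF → ENF
  | c, .cnf a => .cnf (ntimes c a)
  | c, .dnf b => distrib0 c b

/-- The exp-log rewriting `b^(c₁+⋯+cₙ) ⇝ b^c₁ ⋯ b^cₙ`. -/
def explog0 : Base → DNF → CNF
  | b, .two c1 c2 => ntimes (.con c1 b .top) (.con c2 b .top)
  | b, .dis c d3 => ntimes (.con c b .top) (explog0 b d3)

/-- The exp-log rewriting of `b^e` for an ENF exponent `e`. -/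
def explog1 : Base → ENF → CNF
  | d, .cnf c => .con c d .top
  | d, .dnf d1 => explog0 d d1

/-- Distributivity of a DNF over an ENF. -/
def distribn : DNF → ENF → ENF
  | .two c c0, e2 => .dnf (nplus (distrib1 c e2) (distrib1 c0 e2))
  | .dis c d0, e2 => .dnf (nplus (distrib1 c e2) (distribn d0 e2))

/-- Distributivity of an ENF over an ENF. -/
def distrib : ENF → ENF → ENF
  | .cnf a, e2 => distrib1 a e2
  | .dnf b, e2 => distribn b e2

/-- The exp-log rewriting of `c^{e₂}` (pointwise currying). -/
def explogn : CNF → ENF → CNF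
  | .top, _ => .top
  | .con c1 d c2, e2 => ntimes (explog1 d (distrib1 c1 e2)) (explogn c2 e2)

/-- The CNF corresponding to an atomic type: `(1→p)×1`, identified with `p`. -/
def p2c (p : ℕ) : CNF := .con .top (.prp p) .top

def b2c : Base → CNF
  | .prp p => p2c p
  | .bd d => .con .top (.bd d) .top

/-- Coercion of an ENF to a CNF. -/
def enf2cnf : ENF → CNF
  | .cnf c => c
  | .dnf d => b2c (.bd d)
/-- The structurally recursive exp-log normalization of a type. -/
def enf : Ty → ENF
  | .atom p => .cnf (p2c p)
  | .unit => .cnf .top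
  | .sum f0 f1 => .dnf (nplus (enf f0) (enf f1))
  | .prod f0 f1 => distrib (enf f0) (enf f1)
  | .arr f0 f1 => .cnf (explogn (enf2cnf (enf f1)) (enf f0))
-- Reading back an exp-log normal form as a type.
mutual
def tyC : CNF → Ty
  | .top => .unit
  | .con c b rest => .prod (.arr (tyC c) (tyB b)) (tyC rest)

def tyD : DNF → Ty
  | .two c1 c2 => .sum (tyC c1) (tyC c2)
  | .dis c d => .sum (tyC c) (tyD d)

def tyB : Base → Ty
  | .prp p => .atom p
  | .bd d => tyD d
end

def tyE : ENF → Ty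
  | .cnf c => tyC c
  | .dnf d => tyD d

/-! ### Metatheory: composition laws for renaming and substitution -/

theorem Ren.lift_comp_ren {Γ Δ E A} (ρ1 : Ren Γ Δ) (ρ2 : Ren Δ E) :
    (Ren.lift (A := A) fun B x => ρ2 B (ρ1 B x)) = fun B x => Ren.lift ρ2 B (Ren.lift ρ1 B x) := by
  funext B x; cases x <;> rfl

theorem Tm.rename_rename {Γ A} (t : Tm Γ A) :
    ∀ {Δ E} (ρ1 : Ren Γ Δ) (ρ2 : Ren Δ E),
      (t.rename ρ1).rename ρ2 = t.rename (fun B x => ρ2 B (ρ1 B x)) := by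
  induction t with intro Δ E ρ1 ρ2
  | var x => rfl
  | lam t iht => simp only [Tm.rename, iht, Ren.lift_comp_ren]
  | app t u iht ihu => simp only [Tm.rename, iht, ihu]
  | pair t u iht ihu => simp only [Tm.rename, iht, ihu]
  | fst t iht => simp only [Tm.rename, iht]
  | snd t iht => simp only [Tm.rename, iht]
  | inl t iht => simp only [Tm.rename, iht]
  | inr t iht => simp only [Tm.rename, iht]
  | case s t u ihs iht ihu => simp only [Tm.rename, ihs, iht, ihu, Ren.lift_comp_ren]
  | star => rfl

theorem Sub.lift_comp_ren {Γ Δ E A} (ρ1 : Ren Γ Δ) (σ2 : Sub Δ E) :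
    (Sub.lift (A := A) fun B x => σ2 B (ρ1 B x)) = fun B x => Sub.lift σ2 B (Ren.lift ρ1 B x) := by
  funext B x; cases x <;> rfl

theorem Tm.subst_rename {Γ A} (t : Tm Γ A) :
    ∀ {Δ E} (ρ1 : Ren Γ Δ) (σ2 : Sub Δ E),
      (t.rename ρ1).subst σ2 = t.subst (fun B x => σ2 B (ρ1 B x)) := by
  induction t with intro Δ E ρ1 σ2
  | var x => rfl
  | lam t iht => simp only [Tm.rename, Tm.subst, iht, Sub.lift_comp_ren]
  | app t u iht ihu => simp only [Tm.rename, Tm.subst, iht, ihu]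
  | pair t u iht ihu => simp only [Tm.rename, Tm.subst, iht, ihu]
  | fst t iht => simp only [Tm.rename, Tm.subst, iht]
  | snd t iht => simp only [Tm.rename, Tm.subst, iht]
  | inl t iht => simp only [Tm.rename, Tm.subst, iht]
  | inr t iht => simp only [Tm.rename, Tm.subst, iht]
  | case s t u ihs iht ihu =>
      simp only [Tm.rename, Tm.subst, ihs, iht, ihu, Sub.lift_comp_ren]
  | star => rfl

theorem Ren.lift_comp_sub {Γ Δ E A} (σ1 : Sub Γ Δ) (ρ2 : Ren Δ E) :
    (Sub.lift (A := A) fun B x => Tm.rename ρ2 (σ1 B x))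
      = fun B x => Tm.rename (Ren.lift ρ2) (Sub.lift σ1 B x) := by
  funext B x
  cases x with
  | vz => rfl
  | vs y =>
      show Tm.wk (Tm.rename ρ2 (σ1 _ y)) = Tm.rename (Ren.lift ρ2) (Tm.wk (σ1 _ y))
      unfold Tm.wk
      erw [Tm.rename_rename, Tm.rename_rename]
      congr 1

theorem Tm.rename_subst {Γ A} (t : Tm Γ A) :
    ∀ {Δ E} (σ1 : Sub Γ Δ) (ρ2 : Ren Δ E),
      (t.subst σ1).rename ρ2 = t.subst (fun B x => (σ1 B x).rename ρ2) := by
  induction t with intro Δ E σ1 ρ2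
  | var x => rfl
  | lam t iht => simp only [Tm.rename, Tm.subst, iht, Ren.lift_comp_sub]
  | app t u iht ihu => simp only [Tm.rename, Tm.subst, iht, ihu]
  | pair t u iht ihu => simp only [Tm.rename, Tm.subst, iht, ihu]
  | fst t iht => simp only [Tm.rename, Tm.subst, iht]
  | snd t iht => simp only [Tm.rename, Tm.subst, iht]
  | inl t iht => simp only [Tm.rename, Tm.subst, iht]
  | inr t iht => simp only [Tm.rename, Tm.subst, iht]
  | case s t u ihs iht ihu =>
      simp only [Tm.rename, Tm.subst, ihs, iht, ihu, Ren.lift_comp_sub]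
  | star => rfl

theorem Sub.lift_comp_sub {Γ Δ E A} (σ1 : Sub Γ Δ) (σ2 : Sub Δ E) :
    (Sub.lift (A := A) fun B x => Tm.subst σ2 (σ1 B x))
      = fun B x => Tm.subst (Sub.lift σ2) (Sub.lift σ1 B x) := by
  funext B x
  cases x with
  | vz => rfl
  | vs y =>
      show Tm.wk (Tm.subst σ2 (σ1 _ y)) = Tm.subst (Sub.lift σ2) (Tm.wk (σ1 _ y))
      unfold Tm.wk
      erw [Tm.rename_subst, Tm.subst_rename]
      rfl

theorem Tm.subst_subst {Γ A} (t : Tm Γ A) :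
    ∀ {Δ E} (σ1 : Sub Γ Δ) (σ2 : Sub Δ E),
      (t.subst σ1).subst σ2 = t.subst (fun B x => (σ1 B x).subst σ2) := by
  induction t with intro Δ E σ1 σ2
  | var x => rfl
  | lam t iht => simp only [Tm.subst, iht, Sub.lift_comp_sub]
  | app t u iht ihu => simp only [Tm.subst, iht, ihu]
  | pair t u iht ihu => simp only [Tm.subst, iht, ihu]
  | fst t iht => simp only [Tm.subst, iht]
  | snd t iht => simp only [Tm.subst, iht]
  | inl t iht => simp only [Tm.subst, iht]
  | inr t iht => simp only [Tm.subst, iht]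
  | case s t u ihs iht ihu => simp only [Tm.subst, ihs, iht, ihu, Sub.lift_comp_sub]
  | star => rfl

theorem Sub.lift_var {Γ A} :
    (Sub.lift (Γ := Γ) (Δ := Γ) (A := A) fun B x => Tm.var x)
      = fun B x => Tm.var x := by
  funext B x; cases x <;> rfl

theorem Tm.subst_var {Γ A} (t : Tm Γ A) : (t.subst fun B x => .var x) = t := by
  induction t with
  | var x => rfl
  | lam t iht => simp only [Tm.subst, Sub.lift_var, iht]
  | app t u iht ihu => simp only [Tm.subst, iht, ihu]
  | pair t u iht ihu => simp only [Tm.subst, iht, ihu]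
  | fst t iht => simp only [Tm.subst, iht]
  | snd t iht => simp only [Tm.subst, iht]
  | inl t iht => simp only [Tm.subst, iht]
  | inr t iht => simp only [Tm.subst, iht]
  | case s t u ihs iht ihu => simp only [Tm.subst, Sub.lift_var, ihs, iht, ihu]
  | star => rfl

theorem Sub.lift_var_ren {Γ Δ A} (ρ : Ren Γ Δ) :
    (Sub.lift (A := A) fun B x => Tm.var (ρ B x))
      = fun B x => Tm.var (Ren.lift ρ B x) := by
  funext B x; cases x <;> rfl

theorem Tm.subst_var_ren {Γ Δ A} (t : Tm Γ A) (ρ : Ren Γ Δ) :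
    (t.subst fun B x => .var (ρ B x)) = t.rename ρ := by
  induction t generalizing Δ with
  | var x => rfl
  | lam t iht => simp only [Tm.subst, Tm.rename, Sub.lift_var_ren, iht]
  | app t u iht ihu => simp only [Tm.subst, Tm.rename, iht, ihu]
  | pair t u iht ihu => simp only [Tm.subst, Tm.rename, iht, ihu]
  | fst t iht => simp only [Tm.subst, Tm.rename, iht]
  | snd t iht => simp only [Tm.subst, Tm.rename, iht]
  | inl t iht => simp only [Tm.subst, Tm.rename, iht]
  | inr t iht => simp only [Tm.subst, Tm.rename, iht]
  | case s t u ihs iht ihu =>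
      simp only [Tm.subst, Tm.rename, Sub.lift_var_ren, ihs, iht, ihu]
  | star => rfl

/-! ### The cut operation (composition of one-variable terms) -/

/-- The substitution sending the unique variable of a singleton context to `u`. -/
def Sub.one {Γ A} (u : Tm Γ A) : Sub [A] Γ
  | _, .vz => u

/-- Substitution of `u` for the unique variable of a one-variable term. -/
def Tm.cut {Γ A B} (t : Tm [A] B) (u : Tm Γ A) : Tm Γ B :=
  t.subst (Sub.one u)

@[simp] theorem Tm.cut_var {A B} (t : Tm [A] B) : Tm.cut (Γ := [A]) t (.var .vz) = t := by
  unfold Tm.cut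
  have : (Sub.one (Tm.var (Γ := [A]) .vz)) = fun C x => Tm.var x := by
    funext C x
    cases x with
    | vz => rfl
    | vs y => exact nomatch y
  rw [this, Tm.subst_var]

theorem Tm.cut_cut {Γ A B C} (t : Tm [B] C) (u : Tm [A] B) (v : Tm Γ A) :
    Tm.cut t (Tm.cut u v) = Tm.cut (Tm.cut t u) v := by
  unfold Tm.cut
  rw [Tm.subst_subst]
  congr 1
  funext D x
  cases x with
  | vz => rfl
  | vs y => exact nomatch y

theorem Tm.subst_cut {Γ Δ A B} (t : Tm [A] B) (u : Tm Γ A) (σ : Sub Γ Δ) :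
    (Tm.cut t u).subst σ = Tm.cut t (u.subst σ) := by
  unfold Tm.cut
  rw [Tm.subst_subst]
  congr 1
  funext D x
  cases x with
  | vz => rfl
  | vs y => exact nomatch y

theorem Tm.rename_cut {Γ Δ A B} (t : Tm [A] B) (u : Tm Γ A) (ρ : Ren Γ Δ) :
    (Tm.cut t u).rename ρ = Tm.cut t (u.rename ρ) := by
  unfold Tm.cut
  rw [Tm.rename_subst]
  congr 1
  funext D x
  cases x with
  | vz => rfl
  | vs y => exact nomatch y

/-! ### Stability of βη-equality under substitution and renaming -/

theorem Tm.subst_subst1 {Γ Δ A B} (t : Tm (A :: Γ) B) (u : Tm Γ A) (σ : Sub Γ Δ) :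
    (t.subst1 u).subst σ = (t.subst (Sub.lift σ)).subst1 (u.subst σ) := by
  unfold Tm.subst1
  rw [Tm.subst_subst, Tm.subst_subst]
  congr 1
  funext C x
  cases x with
  | vz => rfl
  | vs y =>
      show (σ C y) = Tm.subst _ (Tm.wk (σ C y))
      unfold Tm.wk
      erw [Tm.subst_rename]
      exact (Tm.subst_var _).symm

theorem Tm.subst_wk {Γ Δ A B} (t : Tm Γ B) (σ : Sub Γ Δ) :
    (Tm.wk (B := A) t).subst (Sub.lift σ) = Tm.wk (t.subst σ) := by
  unfold Tm.wk
  erw [Tm.subst_rename, Tm.rename_subst]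
  rfl

theorem Tm.subst_inlTop {Γ Δ A B C} (n : Tm (Ty.sum A B :: Γ) C) (σ : Sub Γ Δ) :
    (n.subst Sub.inlTop).subst (Sub.lift σ) = (n.subst (Sub.lift σ)).subst Sub.inlTop := by
  rw [Tm.subst_subst, Tm.subst_subst]
  congr 1
  funext D x
  cases x with
  | vz => rfl
  | vs y =>
      show Tm.wk (σ D y) = (Tm.wk (σ D y)).subst Sub.inlTop
      unfold Tm.wk
      erw [Tm.subst_rename]
      exact (Tm.subst_var_ren _ _).symm

theorem Tm.subst_inrTop {Γ Δ A B C} (n : Tm (Ty.sum A B :: Γ) C) (σ : Sub Γ Δ) :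
    (n.subst Sub.inrTop).subst (Sub.lift σ) = (n.subst (Sub.lift σ)).subst Sub.inrTop := by
  rw [Tm.subst_subst, Tm.subst_subst]
  congr 1
  funext D x
  cases x with
  | vz => rfl
  | vs y =>
      show Tm.wk (σ D y) = (Tm.wk (σ D y)).subst Sub.inrTop
      unfold Tm.wk
      erw [Tm.subst_rename]
      exact (Tm.subst_var_ren _ _).symm

theorem Jeq.subst {Γ A} {t u : Tm Γ A} (h : Jeq t u) :
    ∀ {Δ} (σ : Sub Γ Δ), Jeq (t.subst σ) (u.subst σ) := by
  induction h with intro Δ σ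
  | refl t => exact Jeq.refl _
  | symm _ ih => exact (ih σ).symm
  | trans _ _ ih1 ih2 => exact (ih1 σ).trans (ih2 σ)
  | lam_congr _ ih => exact Jeq.lam_congr (ih _)
  | app_congr _ _ ih1 ih2 => exact Jeq.app_congr (ih1 σ) (ih2 σ)
  | pair_congr _ _ ih1 ih2 => exact Jeq.pair_congr (ih1 σ) (ih2 σ)
  | fst_congr _ ih => exact Jeq.fst_congr (ih σ)
  | snd_congr _ ih => exact Jeq.snd_congr (ih σ)
  | inl_congr _ ih => exact Jeq.inl_congr (ih σ)
  | inr_congr _ ih => exact Jeq.inr_congr (ih σ)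
  | case_congr _ _ _ ih1 ih2 ih3 => exact Jeq.case_congr (ih1 σ) (ih2 _) (ih3 _)
  | beta_arr t u =>
      have := Jeq.beta_arr (t.subst (Sub.lift σ)) (u.subst σ)
      rw [← Tm.subst_subst1] at this
      exact this
  | beta_fst t u => exact Jeq.beta_fst _ _
  | beta_snd t u => exact Jeq.beta_snd _ _
  | beta_inl m n₁ n₂ =>
      have := Jeq.beta_inl (m.subst σ) (n₁.subst (Sub.lift σ)) (n₂.subst (Sub.lift σ))
      rw [← Tm.subst_subst1] at this
      exact this
  | beta_inr m n₁ n₂ =>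
      have := Jeq.beta_inr (m.subst σ) (n₁.subst (Sub.lift σ)) (n₂.subst (Sub.lift σ))
      rw [← Tm.subst_subst1] at this
      exact this
  | eta_arr t =>
      have := Jeq.eta_arr (t.subst σ)
      show Jeq (t.subst σ) (Tm.lam (Tm.app ((Tm.wk t).subst (Sub.lift σ)) (Tm.var .vz)))
      rw [Tm.subst_wk]
      exact this
  | eta_prod t => exact Jeq.eta_prod _
  | eta_sum n m =>
      have := Jeq.eta_sum (n.subst (Sub.lift σ)) (m.subst σ)
      rw [← Tm.subst_subst1, ← Tm.subst_inlTop, ← Tm.subst_inrTop] at this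
      exact this
  | eta_unit t => exact Jeq.eta_unit _

theorem Jeq.rename {Γ Δ A} {t u : Tm Γ A} (h : Jeq t u) (ρ : Ren Γ Δ) :
    Jeq (t.rename ρ) (u.rename ρ) := by
  rw [← Tm.subst_var_ren t ρ, ← Tm.subst_var_ren u ρ]
  exact h.subst _

theorem Tm.subst_jeq {Γ A} (t : Tm Γ A) :
    ∀ {Δ} {σ σ' : Sub Γ Δ}, (∀ B x, Jeq (σ B x) (σ' B x)) → Jeq (t.subst σ) (t.subst σ') := by
  induction t with intro Δ σ σ' h
  | var x => exact h _ x
  | lam t iht =>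
      refine Jeq.lam_congr (iht ?_)
      intro B x
      cases x with
      | vz => exact Jeq.refl _
      | vs y => exact (h _ y).rename _
  | app t u iht ihu => exact Jeq.app_congr (iht h) (ihu h)
  | pair t u iht ihu => exact Jeq.pair_congr (iht h) (ihu h)
  | fst t iht => exact Jeq.fst_congr (iht h)
  | snd t iht => exact Jeq.snd_congr (iht h)
  | inl t iht => exact Jeq.inl_congr (iht h)
  | inr t iht => exact Jeq.inr_congr (iht h)
  | case s t u ihs iht ihu =>
      refine Jeq.case_congr (ihs h) (iht ?_) (ihu ?_) <;>
      · intro B x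
        cases x with
        | vz => exact Jeq.refl _
        | vs y => exact (h _ y).rename _
  | star => exact Jeq.refl _

theorem Jeq.cut_left {Γ A B} {t t' : Tm [A] B} (h : Jeq t t') (u : Tm Γ A) :
    Jeq (t.cut u) (t'.cut u) := h.subst _

theorem Jeq.cut_right {Γ A B} (t : Tm [A] B) {u u' : Tm Γ A} (h : Jeq u u') :
    Jeq (t.cut u) (t.cut u') := by
  refine Tm.subst_jeq t ?_
  intro C x
  cases x with
  | vz => exact h
  | vs y => exact nomatch y

/-! ### Commuting conversions for case, derived from `eta_sum` -/

def Sub.wk1 {Γ A} : Sub Γ (A :: Γ) := fun _ y => .var (.vs y)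

def Sub.cons {Γ Δ A} (u : Tm Δ A) (σ : Sub Γ Δ) : Sub (A :: Γ) Δ
  | _, .vz => u
  | _, .vs y => σ _ y

/-- η-expansion of a sum-typed term into a case split. -/
theorem Jeq.case_eta {Γ A B} (s : Tm Γ (Ty.sum A B)) :
    Jeq s (.case s (.inl (.var .vz)) (.inr (.var .vz))) :=
  Jeq.eta_sum (.var .vz) s

theorem Tm.subst_lift_single_rename {Γ S A D} (m : Tm (A :: Γ) D) (s : Tm Γ S) :
    (m.rename (Ren.lift (fun _ x => Var.vs (B := S) x))).subst (Sub.lift (Sub.single s)) = m := by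
  rw [Tm.subst_rename]
  have : (fun (B : Ty) (x : Var (A :: Γ) B) =>
      Sub.lift (Sub.single s) B (Ren.lift (fun _ x => Var.vs (B := S) x) B x))
      = fun B x => Tm.var x := by
    funext B x; cases x <;> rfl
  rw [this, Tm.subst_var]

theorem Tm.subst_lift_inlTop_rename {Γ A B X D} (m : Tm (X :: Γ) D) :
    (m.rename (Ren.lift (fun _ x => Var.vs (B := Ty.sum A B) x))).subst (Sub.lift Sub.inlTop)
      = m.rename (Ren.lift (fun _ x => Var.vs (B := A) x)) := by
  rw [Tm.subst_rename]
  have : (fun (C : Ty) (x : Var (X :: Γ) C) =>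
      Sub.lift Sub.inlTop C (Ren.lift (fun _ x => Var.vs (B := Ty.sum A B) x) C x))
      = fun C x => Tm.var (Ren.lift (fun _ x => Var.vs (B := A) x) C x) := by
    funext C x; cases x <;> rfl
  rw [this, Tm.subst_var_ren]

theorem Tm.subst_lift_inrTop_rename {Γ A B X D} (m : Tm (X :: Γ) D) :
    (m.rename (Ren.lift (fun _ x => Var.vs (B := Ty.sum A B) x))).subst (Sub.lift Sub.inrTop)
      = m.rename (Ren.lift (fun _ x => Var.vs (B := B) x)) := by
  rw [Tm.subst_rename]
  have : (fun (C : Ty) (x : Var (X :: Γ) C) =>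
      Sub.lift Sub.inrTop C (Ren.lift (fun _ x => Var.vs (B := Ty.sum A B) x) C x))
      = fun C x => Tm.var (Ren.lift (fun _ x => Var.vs (B := B) x) C x) := by
    funext C x; cases x <;> rfl
  rw [this, Tm.subst_var_ren]

theorem Tm.subst1_var_rename {Γ A D} (m : Tm (A :: Γ) D) :
    ((m.rename (Ren.lift (fun _ x => Var.vs (B := A) x))).subst1
        (.var (Γ := A :: Γ) .vz)) = m := by
  unfold Tm.subst1
  rw [Tm.subst_rename]
  have : (fun (B : Ty) (x : Var (A :: Γ) B) =>
      Sub.single (Tm.var (Γ := A :: Γ) .vz) B (Ren.lift (fun _ x => Var.vs (B := A) x) B x))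
      = fun B x => Tm.var x := by
    funext B x; cases x <;> rfl
  rw [this, Tm.subst_var]

/-- The fundamental commuting conversion: a substitution of a case term into a
one-hole term commutes with the case split. -/
theorem Jeq.subst1_case {Γ D C A B} (t : Tm (D :: Γ) C) (s : Tm Γ (Ty.sum A B))
    (m1 : Tm (A :: Γ) D) (m2 : Tm (B :: Γ) D) :
    Jeq (t.subst1 (.case s m1 m2))
        (.case s (t.subst (Sub.cons m1 Sub.wk1)) (t.subst (Sub.cons m2 Sub.wk1))) := by
  set K : Tm (Ty.sum A B :: Γ) D :=
    Tm.case (.var .vz)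
      (m1.rename (Ren.lift (fun _ x => Var.vs (B := Ty.sum A B) x)))
      (m2.rename (Ren.lift (fun _ x => Var.vs (B := Ty.sum A B) x))) with hK
  set n : Tm (Ty.sum A B :: Γ) C := t.subst (Sub.cons K Sub.wk1) with hn
  have e1 : n.subst1 s = t.subst1 (.case s m1 m2) := by
    unfold Tm.subst1
    rw [hn, Tm.subst_subst]
    congr 1
    funext X x
    cases x with
    | vz =>
        show Tm.case s ((m1.rename _).subst (Sub.lift (Sub.single s)))
              ((m2.rename _).subst (Sub.lift (Sub.single s))) = Tm.case s m1 m2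
        rw [Tm.subst_lift_single_rename, Tm.subst_lift_single_rename]
    | vs y => rfl
  have e2 : Jeq (n.subst Sub.inlTop) (t.subst (Sub.cons m1 Sub.wk1)) := by
    rw [hn, Tm.subst_subst]
    refine Tm.subst_jeq t ?_
    intro X x
    cases x with
    | vz =>
        show Jeq (Tm.case (.inl (.var .vz))
            ((m1.rename _).subst (Sub.lift Sub.inlTop))
            ((m2.rename _).subst (Sub.lift Sub.inlTop))) m1
        rw [Tm.subst_lift_inlTop_rename, Tm.subst_lift_inlTop_rename]
        refine (Jeq.beta_inl _ _ _).trans ?_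
        rw [Tm.subst1_var_rename]
        exact Jeq.refl _
    | vs y => exact Jeq.refl _
  have e3 : Jeq (n.subst Sub.inrTop) (t.subst (Sub.cons m2 Sub.wk1)) := by
    rw [hn, Tm.subst_subst]
    refine Tm.subst_jeq t ?_
    intro X x
    cases x with
    | vz =>
        show Jeq (Tm.case (.inr (.var .vz))
            ((m1.rename _).subst (Sub.lift Sub.inrTop))
            ((m2.rename _).subst (Sub.lift Sub.inrTop))) m2
        rw [Tm.subst_lift_inrTop_rename, Tm.subst_lift_inrTop_rename]
        refine (Jeq.beta_inr _ _ _).trans ?_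
        rw [Tm.subst1_var_rename]
        exact Jeq.refl _
    | vs y => exact Jeq.refl _
  have h := Jeq.eta_sum n s
  rw [e1] at h
  exact h.trans (Jeq.case_congr (Jeq.refl s) e2 e3)

/-- Embedding `Ren [D] (D :: Γ)`. -/
def Ren.emb1 {Γ : Ctx} {D : Ty} : Ren [D] (D :: Γ)
  | _, .vz => .vz

/-- Commuting a cut with a case split. -/
theorem Jeq.cut_case {Γ D C A B} (t : Tm [D] C) (s : Tm Γ (Ty.sum A B))
    (m1 : Tm (A :: Γ) D) (m2 : Tm (B :: Γ) D) :
    Jeq (t.cut (.case s m1 m2)) (.case s (t.cut m1) (t.cut m2)) := by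
  have emb : ∀ (u : Tm Γ D), Tm.cut t u = (t.rename Ren.emb1).subst1 u := by
    intro u
    unfold Tm.cut Tm.subst1
    rw [Tm.subst_rename]
    congr 1
    funext Y x
    cases x with
    | vz => rfl
    | vs y => exact nomatch y
  have c : ∀ (u : Tm Γ D) (m : Tm (A :: Γ) D) (m' : Tm (B :: Γ) D), True := fun _ _ _ => trivial
  have h := Jeq.subst1_case (t.rename (Ren.emb1 (Γ := Γ))) s m1 m2
  rw [← emb] at h
  have c1 : (t.rename (Ren.emb1 (Γ := Γ))).subst (Sub.cons m1 Sub.wk1) = t.cut m1 := by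
    unfold Tm.cut
    rw [Tm.subst_rename]
    congr 1
    funext Y x
    cases x with
    | vz => rfl
    | vs y => exact nomatch y
  have c2 : (t.rename (Ren.emb1 (Γ := Γ))).subst (Sub.cons m2 Sub.wk1) = t.cut m2 := by
    unfold Tm.cut
    rw [Tm.subst_rename]
    congr 1
    funext Y x
    cases x with
    | vz => rfl
    | vs y => exact nomatch y
  rw [c1, c2] at h
  exact h

/-! ### Isomorphisms via one-variable terms -/

structure IsoH (A B : Ty) where
  fwd : Tm [A] B
  bwd : Tm [B] A
  bwdFwd : Jeq (bwd.cut fwd) (.var .vz)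
  fwdBwd : Jeq (fwd.cut bwd) (.var .vz)

def IsoH.refl (A : Ty) : IsoH A A :=
  ⟨.var .vz, .var .vz, Jeq.refl _, Jeq.refl _⟩

def IsoH.symm {A B : Ty} (i : IsoH A B) : IsoH B A :=
  ⟨i.bwd, i.fwd, i.fwdBwd, i.bwdFwd⟩

def IsoH.trans {A B C : Ty} (i : IsoH A B) (j : IsoH B C) : IsoH A C where
  fwd := j.fwd.cut i.fwd
  bwd := i.bwd.cut j.bwd
  bwdFwd := by
    rw [← Tm.cut_cut]
    refine Jeq.trans ?_ i.bwdFwd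
    refine Jeq.cut_right i.bwd ?_
    rw [Tm.cut_cut]
    exact Jeq.cut_left j.bwdFwd i.fwd
  fwdBwd := by
    rw [← Tm.cut_cut]
    refine Jeq.trans ?_ j.fwdBwd
    refine Jeq.cut_right j.fwd ?_
    rw [Tm.cut_cut]
    exact Jeq.cut_left i.fwdBwd j.bwd

/-- An `IsoH` yields an isomorphism in the official sense. -/
theorem IsoH.iso {A B : Ty} (i : IsoH A B) : Iso A B := by
  refine ⟨.lam i.bwd, .lam i.fwd, ?_, ?_⟩
  · refine Jeq.lam_congr ?_
    show Jeq (Tm.app (.lam (i.bwd.rename (Ren.lift fun _ v => .vs v)))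
        (Tm.app (.lam (i.fwd.rename (Ren.lift fun _ v => .vs v))) (.var .vz))) _
    refine Jeq.trans (Jeq.app_congr (Jeq.refl _) (Jeq.beta_arr _ _)) ?_
    have h1 : (i.fwd.rename (Ren.lift fun _ v => Var.vs v)).subst1
        (.var (Γ := [A]) .vz) = i.fwd := by
      unfold Tm.subst1
      rw [Tm.subst_rename]
      have : (fun (B' : Ty) (x : Var [A] B') =>
          Sub.single (Tm.var (Γ := [A]) .vz) B' ((Ren.lift fun _ v => Var.vs v) B' x))
          = fun B' x => Tm.var x := by
        funext B' x
        cases x with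
        | vz => rfl
        | vs y => exact nomatch y
      rw [this, Tm.subst_var]
    rw [h1]
    refine Jeq.trans (Jeq.beta_arr _ _) ?_
    have h2 : (i.bwd.rename (Ren.lift fun _ v => Var.vs v)).subst1 i.fwd
        = i.bwd.cut i.fwd := by
      unfold Tm.subst1 Tm.cut
      rw [Tm.subst_rename]
      congr 1
      funext B' x
      cases x with
      | vz => rfl
      | vs y => exact nomatch y
    rw [h2]
    exact i.bwdFwd
  · refine Jeq.lam_congr ?_
    show Jeq (Tm.app (.lam (i.fwd.rename (Ren.lift fun _ v => .vs v)))
        (Tm.app (.lam (i.bwd.rename (Ren.lift fun _ v => .vs v))) (.var .vz))) _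
    refine Jeq.trans (Jeq.app_congr (Jeq.refl _) (Jeq.beta_arr _ _)) ?_
    have h1 : (i.bwd.rename (Ren.lift fun _ v => Var.vs v)).subst1
        (.var (Γ := [B]) .vz) = i.bwd := by
      unfold Tm.subst1
      rw [Tm.subst_rename]
      have : (fun (B' : Ty) (x : Var [B] B') =>
          Sub.single (Tm.var (Γ := [B]) .vz) B' ((Ren.lift fun _ v => Var.vs v) B' x))
          = fun B' x => Tm.var x := by
        funext B' x
        cases x with
        | vz => rfl
        | vs y => exact nomatch y
      rw [this, Tm.subst_var]
    rw [h1]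
    refine Jeq.trans (Jeq.beta_arr _ _) ?_
    have h2 : (i.fwd.rename (Ren.lift fun _ v => Var.vs v)).subst1 i.bwd
        = i.fwd.cut i.bwd := by
      unfold Tm.subst1 Tm.cut
      rw [Tm.subst_rename]
      congr 1
      funext B' x
      cases x with
      | vz => rfl
      | vs y => exact nomatch y
    rw [h2]
    exact i.fwdBwd

instance {Γ A} : Trans (Jeq (Γ := Γ) (A := A)) (Jeq (Γ := Γ) (A := A))
    (Jeq (Γ := Γ) (A := A)) := ⟨Jeq.trans⟩

scoped infix:40 " ≋ " => Jeq

theorem Jeq.eta_arr_var {Γ A B} :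
    Jeq (Tm.var (Γ := Ty.arr A B :: Γ) .vz)
        (.lam (.app (.var (.vs .vz)) (.var .vz))) :=
  Jeq.eta_arr (Tm.var .vz)

theorem Jeq.eta_arr_fst {Γ A B C} :
    Jeq (Tm.fst (Tm.var (Γ := (Ty.prod (Ty.arr A B) C) :: Γ) .vz))
        (.lam (.app (.fst (.var (.vs .vz))) (.var .vz))) :=
  Jeq.eta_arr (Tm.fst (Tm.var .vz))

theorem Jeq.eta_arr_snd {Γ A B C} :
    Jeq (Tm.snd (Tm.var (Γ := (Ty.prod C (Ty.arr A B)) :: Γ) .vz))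
        (.lam (.app (.snd (.var (.vs .vz))) (.var .vz))) :=
  Jeq.eta_arr (Tm.snd (Tm.var .vz))

/-! ### Primitive isomorphisms: products and arrows -/

def IsoH.prodComm (A B : Ty) : IsoH (.prod A B) (.prod B A) where
  fwd := .pair (.snd (.var .vz)) (.fst (.var .vz))
  bwd := .pair (.snd (.var .vz)) (.fst (.var .vz))
  bwdFwd := by
    show Jeq (Tm.pair (.snd (.pair (.snd (.var .vz)) (.fst (.var .vz))))
                      (.fst (.pair (.snd (.var .vz)) (.fst (.var .vz))))) (.var .vz)
    exact (Jeq.pair_congr (Jeq.beta_snd _ _) (Jeq.beta_fst _ _)).trans (Jeq.eta_prod _).symm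
  fwdBwd := by
    show Jeq (Tm.pair (.snd (.pair (.snd (.var .vz)) (.fst (.var .vz))))
                      (.fst (.pair (.snd (.var .vz)) (.fst (.var .vz))))) (.var .vz)
    exact (Jeq.pair_congr (Jeq.beta_snd _ _) (Jeq.beta_fst _ _)).trans (Jeq.eta_prod _).symm

def IsoH.prodAssoc (A B C : Ty) : IsoH (.prod (.prod A B) C) (.prod A (.prod B C)) where
  fwd := .pair (.fst (.fst (.var .vz))) (.pair (.snd (.fst (.var .vz))) (.snd (.var .vz)))
  bwd := .pair (.pair (.fst (.var .vz)) (.fst (.snd (.var .vz)))) (.snd (.snd (.var .vz)))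
  bwdFwd := by
    set F : Tm [Ty.prod (.prod A B) C] (Ty.prod A (.prod B C)) :=
      .pair (.fst (.fst (.var .vz))) (.pair (.snd (.fst (.var .vz))) (.snd (.var .vz))) with hF
    show Jeq (Tm.pair (.pair (.fst F) (.fst (.snd F))) (.snd (.snd F))) (.var .vz)
    have h1 : Jeq (Tm.fst F) (.fst (.fst (.var .vz))) := Jeq.beta_fst _ _
    have hsnd : Jeq (Tm.snd F) (.pair (.snd (.fst (.var .vz))) (.snd (.var .vz))) :=
      Jeq.beta_snd _ _
    have h2 : Jeq (Tm.fst (.snd F)) (.snd (.fst (.var .vz))) :=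
      (Jeq.fst_congr hsnd).trans (Jeq.beta_fst _ _)
    have h3 : Jeq (Tm.snd (.snd F)) (.snd (.var .vz)) :=
      (Jeq.snd_congr hsnd).trans (Jeq.beta_snd _ _)
    calc Tm.pair (.pair (.fst F) (.fst (.snd F))) (.snd (.snd F))
         ≋ Tm.pair (.pair (.fst (.fst (.var .vz))) (.snd (.fst (.var .vz)))) (.snd (.var .vz)) :=
          Jeq.pair_congr (Jeq.pair_congr h1 h2) h3
      _ ≋ Tm.pair (.fst (.var .vz)) (.snd (.var .vz)) :=
          Jeq.pair_congr (Jeq.eta_prod _).symm (Jeq.refl _)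
      _ ≋ Tm.var .vz := (Jeq.eta_prod _).symm
  fwdBwd := by
    set F : Tm [Ty.prod A (.prod B C)] (Ty.prod (.prod A B) C) :=
      .pair (.pair (.fst (.var .vz)) (.fst (.snd (.var .vz)))) (.snd (.snd (.var .vz))) with hF
    show Jeq (Tm.pair (.fst (.fst F)) (.pair (.snd (.fst F)) (.snd F))) (.var .vz)
    have hfst : Jeq (Tm.fst F) (.pair (.fst (.var .vz)) (.fst (.snd (.var .vz)))) :=
      Jeq.beta_fst _ _
    have h1 : Jeq (Tm.fst (.fst F)) (.fst (.var .vz)) :=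
      (Jeq.fst_congr hfst).trans (Jeq.beta_fst _ _)
    have h2 : Jeq (Tm.snd (.fst F)) (.fst (.snd (.var .vz))) :=
      (Jeq.snd_congr hfst).trans (Jeq.beta_snd _ _)
    have h3 : Jeq (Tm.snd F) (.snd (.snd (.var .vz))) := Jeq.beta_snd _ _
    calc Tm.pair (.fst (.fst F)) (.pair (.snd (.fst F)) (.snd F))
         ≋ Tm.pair (.fst (.var .vz)) (.pair (.fst (.snd (.var .vz))) (.snd (.snd (.var .vz)))) :=
          Jeq.pair_congr h1 (Jeq.pair_congr h2 h3)
      _ ≋ Tm.pair (.fst (.var .vz)) (.snd (.var .vz)) :=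
          Jeq.pair_congr (Jeq.refl _) (Jeq.eta_prod _).symm
      _ ≋ Tm.var .vz := (Jeq.eta_prod _).symm

def IsoH.prodUnitL (A : Ty) : IsoH (.prod .unit A) A where
  fwd := .snd (.var .vz)
  bwd := .pair .star (.var .vz)
  bwdFwd := by
    show Jeq (Tm.pair .star (.snd (.var .vz))) (.var .vz)
    refine Jeq.symm ?_
    calc Tm.var (Γ := [Ty.prod .unit A]) .vz
         ≋ Tm.pair (.fst (.var .vz)) (.snd (.var .vz)) := Jeq.eta_prod _
      _ ≋ Tm.pair .star (.snd (.var .vz)) := Jeq.pair_congr (Jeq.eta_unit _) (Jeq.refl _)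
  fwdBwd := by
    show Jeq (Tm.snd (.pair .star (.var .vz))) (.var .vz)
    exact Jeq.beta_snd _ _

def IsoH.prodUnitR (A : Ty) : IsoH (.prod A .unit) A where
  fwd := .fst (.var .vz)
  bwd := .pair (.var .vz) .star
  bwdFwd := by
    show Jeq (Tm.pair (.fst (.var .vz)) .star) (.var .vz)
    refine Jeq.symm ?_
    calc Tm.var (Γ := [Ty.prod A .unit]) .vz
         ≋ Tm.pair (.fst (.var .vz)) (.snd (.var .vz)) := Jeq.eta_prod _
      _ ≋ Tm.pair (.fst (.var .vz)) .star := Jeq.pair_congr (Jeq.refl _) (Jeq.eta_unit _)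
  fwdBwd := by
    show Jeq (Tm.fst (.pair (.var .vz) .star)) (.var .vz)
    exact Jeq.beta_fst _ _

def IsoH.unitArr (A : Ty) : IsoH (.arr .unit A) A where
  fwd := .app (.var .vz) .star
  bwd := .lam (.var (.vs .vz))
  bwdFwd := by
    show Jeq (Tm.lam (.app (.var (.vs .vz)) .star)) (.var .vz)
    refine Jeq.symm ?_
    calc Tm.var (Γ := [Ty.arr .unit A]) .vz
         ≋ Tm.lam (.app (.var (.vs .vz)) (.var .vz)) := Jeq.eta_arr_var
      _ ≋ Tm.lam (.app (.var (.vs .vz)) .star) :=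
          Jeq.lam_congr (Jeq.app_congr (Jeq.refl _) (Jeq.eta_unit _))
  fwdBwd := by
    show Jeq (Tm.app (.lam (.var (.vs .vz))) .star) (.var .vz)
    exact Jeq.beta_arr _ _

def IsoH.arrUnit (A : Ty) : IsoH (.arr A .unit) .unit where
  fwd := .star
  bwd := .lam .star
  bwdFwd := by
    show Jeq (Tm.lam (Γ := [Ty.arr A .unit]) .star) (.var .vz)
    refine Jeq.symm ?_
    calc Tm.var (Γ := [Ty.arr A .unit]) .vz
         ≋ Tm.lam (.app (.var (.vs .vz)) (.var .vz)) := Jeq.eta_arr_var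
      _ ≋ Tm.lam .star := Jeq.lam_congr (Jeq.eta_unit _)
  fwdBwd := by
    show Jeq (Tm.star (Γ := [Ty.unit])) (.var .vz)
    exact (Jeq.eta_unit _).symm

def IsoH.arrProd (A B C : Ty) : IsoH (.arr A (.prod B C)) (.prod (.arr A B) (.arr A C)) where
  fwd := .pair (.lam (.fst (.app (.var (.vs .vz)) (.var .vz))))
               (.lam (.snd (.app (.var (.vs .vz)) (.var .vz))))
  bwd := .lam (.pair (.app (.fst (.var (.vs .vz))) (.var .vz))
                     (.app (.snd (.var (.vs .vz))) (.var .vz)))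
  bwdFwd := by
    set P : Tm [Ty.arr A (.prod B C)] (Ty.prod (.arr A B) (.arr A C)) :=
      .pair (.lam (.fst (.app (.var (.vs .vz)) (.var .vz))))
            (.lam (.snd (.app (.var (.vs .vz)) (.var .vz)))) with hP
    show Jeq (Tm.lam (.pair (.app (.fst (Tm.wk P)) (.var .vz))
                            (.app (.snd (Tm.wk P)) (.var .vz)))) (.var .vz)
    have hwk : Tm.wk (B := A) P =
        .pair (.lam (.fst (.app (.var (.vs (.vs .vz))) (.var .vz))))
              (.lam (.snd (.app (.var (.vs (.vs .vz))) (.var .vz)))) := rfl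
    rw [hwk]
    refine Jeq.trans (Jeq.lam_congr (Jeq.pair_congr
        (Jeq.app_congr (Jeq.beta_fst _ _) (Jeq.refl _))
        (Jeq.app_congr (Jeq.beta_snd _ _) (Jeq.refl _)))) ?_
    refine Jeq.trans (Jeq.lam_congr (Jeq.pair_congr (Jeq.beta_arr _ _) (Jeq.beta_arr _ _))) ?_
    show Jeq (Tm.lam (.pair (.fst (.app (.var (.vs .vz)) (.var .vz)))
                            (.snd (.app (.var (.vs .vz)) (.var .vz))))) (.var .vz)
    refine Jeq.trans (Jeq.lam_congr (Jeq.eta_prod _).symm) ?_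
    exact Jeq.eta_arr_var.symm
  fwdBwd := by
    set W : Tm [Ty.prod (.arr A B) (.arr A C)] (Ty.arr A (.prod B C)) :=
      .lam (.pair (.app (.fst (.var (.vs .vz))) (.var .vz))
                  (.app (.snd (.var (.vs .vz))) (.var .vz))) with hW
    show Jeq (Tm.pair (.lam (.fst (.app (Tm.wk W) (.var .vz))))
                      (.lam (.snd (.app (Tm.wk W) (.var .vz))))) (.var .vz)
    have hwk : Tm.wk (B := A) W =
        .lam (.pair (.app (.fst (.var (.vs (.vs .vz)))) (.var .vz))
                    (.app (.snd (.var (.vs (.vs .vz)))) (.var .vz))) := rfl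
    rw [hwk]
    refine Jeq.trans (Jeq.pair_congr
        (Jeq.lam_congr (Jeq.fst_congr (Jeq.beta_arr _ _)))
        (Jeq.lam_congr (Jeq.snd_congr (Jeq.beta_arr _ _)))) ?_
    refine Jeq.trans (Jeq.pair_congr
        (Jeq.lam_congr (Jeq.beta_fst _ _)) (Jeq.lam_congr (Jeq.beta_snd _ _))) ?_
    show Jeq (Tm.pair (.lam (.app (.fst (.var (.vs .vz))) (.var .vz)))
                      (.lam (.app (.snd (.var (.vs .vz))) (.var .vz)))) (.var .vz)
    refine Jeq.trans (Jeq.pair_congr Jeq.eta_arr_fst.symm Jeq.eta_arr_snd.symm) ?_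
    exact (Jeq.eta_prod _).symm

def IsoH.curry (E C D : Ty) : IsoH (.arr E (.arr C D)) (.arr (.prod C E) D) where
  fwd := .lam (.app (.app (.var (.vs .vz)) (.snd (.var .vz))) (.fst (.var .vz)))
  bwd := .lam (.lam (.app (.var (.vs (.vs .vz))) (.pair (.var .vz) (.var (.vs .vz)))))
  bwdFwd := by
    show Jeq (Tm.lam (.lam (.app
        (.lam (.app (.app (.var (.vs (.vs (.vs .vz)))) (.snd (.var .vz))) (.fst (.var .vz))))
        (.pair (.var .vz) (.var (.vs .vz)))))) (.var .vz)
    refine Jeq.trans (Jeq.lam_congr (Jeq.lam_congr (Jeq.beta_arr _ _))) ?_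
    show Jeq (Tm.lam (.lam (.app
        (.app (.var (.vs (.vs .vz))) (.snd (.pair (.var .vz) (.var (.vs .vz)))))
        (.fst (.pair (.var .vz) (.var (.vs .vz))))))) (.var .vz)
    refine Jeq.trans (Jeq.lam_congr (Jeq.lam_congr
        (Jeq.app_congr (Jeq.app_congr (Jeq.refl _) (Jeq.beta_snd _ _)) (Jeq.beta_fst _ _)))) ?_
    refine Jeq.symm ?_
    calc Tm.var (Γ := [Ty.arr E (.arr C D)]) .vz
         ≋ Tm.lam (.app (.var (.vs .vz)) (.var .vz)) := Jeq.eta_arr_var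
      _ ≋ Tm.lam (.lam (.app (.app (.var (.vs (.vs .vz))) (.var (.vs .vz))) (.var .vz))) :=
          Jeq.lam_congr (Jeq.eta_arr (Tm.app (.var (.vs .vz)) (.var .vz)))
  fwdBwd := by
    show Jeq (Tm.lam (.app (.app
        (.lam (.lam (.app (.var (.vs (.vs (.vs .vz)))) (.pair (.var .vz) (.var (.vs .vz))))))
        (.snd (.var .vz))) (.fst (.var .vz)))) (.var .vz)
    refine Jeq.trans (Jeq.lam_congr (Jeq.app_congr (Jeq.beta_arr _ _) (Jeq.refl _))) ?_
    show Jeq (Tm.lam (.app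
        (.lam (.app (.var (.vs (.vs .vz))) (.pair (.var .vz) (.snd (.var (.vs .vz))))))
        (.fst (.var .vz)))) (.var .vz)
    refine Jeq.trans (Jeq.lam_congr (Jeq.beta_arr _ _)) ?_
    show Jeq (Tm.lam (.app (.var (.vs .vz))
        (.pair (.fst (.var .vz)) (.snd (.var .vz))))) (.var .vz)
    refine Jeq.trans (Jeq.lam_congr
        (Jeq.app_congr (Jeq.refl _) (Jeq.eta_prod _).symm)) ?_
    exact Jeq.eta_arr_var.symm

def IsoH.arrSum (A B C : Ty) : IsoH (.arr (.sum A B) C) (.prod (.arr A C) (.arr B C)) where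
  fwd := .pair (.lam (.app (.var (.vs .vz)) (.inl (.var .vz))))
               (.lam (.app (.var (.vs .vz)) (.inr (.var .vz))))
  bwd := .lam (.case (.var .vz)
      (.app (.fst (.var (.vs (.vs .vz)))) (.var .vz))
      (.app (.snd (.var (.vs (.vs .vz)))) (.var .vz)))
  bwdFwd := by
    show Jeq (Tm.lam (.case (.var .vz)
        (.app (.fst (.pair (.lam (.app (.var (.vs (.vs (.vs .vz)))) (.inl (.var .vz))))
                           (.lam (.app (.var (.vs (.vs (.vs .vz)))) (.inr (.var .vz))))))
              (.var .vz))
        (.app (.snd (.pair (.lam (.app (.var (.vs (.vs (.vs .vz)))) (.inl (.var .vz))))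
                           (.lam (.app (.var (.vs (.vs (.vs .vz)))) (.inr (.var .vz))))))
              (.var .vz)))) (.var .vz)
    refine Jeq.trans (Jeq.lam_congr (Jeq.case_congr (Jeq.refl _)
        (Jeq.app_congr (Jeq.beta_fst _ _) (Jeq.refl _))
        (Jeq.app_congr (Jeq.beta_snd _ _) (Jeq.refl _)))) ?_
    refine Jeq.trans (Jeq.lam_congr (Jeq.case_congr (Jeq.refl _)
        (Jeq.beta_arr _ _) (Jeq.beta_arr _ _))) ?_
    refine Jeq.symm (Jeq.trans Jeq.eta_arr_var (Jeq.lam_congr ?_))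
    exact Jeq.eta_sum (Tm.app
      (Γ := Ty.sum A B :: Ty.sum A B :: [Ty.arr (Ty.sum A B) C])
      (.var (.vs (.vs .vz))) (.var .vz)) (.var .vz)
  fwdBwd := by
    show Jeq (Tm.pair
        (.lam (.app (.lam (.case (.var .vz)
            (.app (.fst (.var (.vs (.vs (.vs .vz))))) (.var .vz))
            (.app (.snd (.var (.vs (.vs (.vs .vz))))) (.var .vz)))) (.inl (.var .vz))))
        (.lam (.app (.lam (.case (.var .vz)
            (.app (.fst (.var (.vs (.vs (.vs .vz))))) (.var .vz))
            (.app (.snd (.var (.vs (.vs (.vs .vz))))) (.var .vz)))) (.inr (.var .vz)))))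
      (.var .vz)
    refine Jeq.trans (Jeq.pair_congr (Jeq.lam_congr (Jeq.beta_arr _ _))
        (Jeq.lam_congr (Jeq.beta_arr _ _))) ?_
    show Jeq (Tm.pair
        (.lam (.case (.inl (.var .vz))
            (.app (.fst (.var (.vs (.vs .vz)))) (.var .vz))
            (.app (.snd (.var (.vs (.vs .vz)))) (.var .vz))))
        (.lam (.case (.inr (.var .vz))
            (.app (.fst (.var (.vs (.vs .vz)))) (.var .vz))
            (.app (.snd (.var (.vs (.vs .vz)))) (.var .vz))))) (.var .vz)
    refine Jeq.trans (Jeq.pair_congr (Jeq.lam_congr (Jeq.beta_inl _ _ _))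
        (Jeq.lam_congr (Jeq.beta_inr _ _ _))) ?_
    show Jeq (Tm.pair (.lam (.app (.fst (.var (.vs .vz))) (.var .vz)))
                      (.lam (.app (.snd (.var (.vs .vz))) (.var .vz)))) (.var .vz)
    refine Jeq.trans (Jeq.pair_congr Jeq.eta_arr_fst.symm Jeq.eta_arr_snd.symm) ?_
    exact (Jeq.eta_prod _).symm

/-! ### Congruence of isomorphism with the type constructors -/

def IsoH.congrProd {A A' B B'} (i : IsoH A A') (j : IsoH B B') :
    IsoH (.prod A B) (.prod A' B') where
  fwd := .pair (i.fwd.cut (.fst (.var .vz))) (j.fwd.cut (.snd (.var .vz)))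
  bwd := .pair (i.bwd.cut (.fst (.var .vz))) (j.bwd.cut (.snd (.var .vz)))
  bwdFwd := by
    set F : Tm [Ty.prod A B] (Ty.prod A' B') :=
      .pair (i.fwd.cut (.fst (.var .vz))) (j.fwd.cut (.snd (.var .vz))) with hF
    have e : (Tm.pair (i.bwd.cut (.fst (.var .vz))) (j.bwd.cut (.snd (.var .vz)))).cut F
        = Tm.pair (i.bwd.cut (.fst F)) (j.bwd.cut (.snd F)) := by
      show Tm.pair ((i.bwd.cut (.fst (.var .vz))).subst (Sub.one F))
          ((j.bwd.cut (.snd (.var .vz))).subst (Sub.one F)) = _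
      rw [Tm.subst_cut, Tm.subst_cut]
      rfl
    rw [e]
    have h1 : Jeq (i.bwd.cut (.fst F)) (.fst (.var .vz)) := by
      refine Jeq.trans (Jeq.cut_right _ (Jeq.beta_fst _ _)) ?_
      rw [Tm.cut_cut]
      exact Jeq.cut_left i.bwdFwd _
    have h2 : Jeq (j.bwd.cut (.snd F)) (.snd (.var .vz)) := by
      refine Jeq.trans (Jeq.cut_right _ (Jeq.beta_snd _ _)) ?_
      rw [Tm.cut_cut]
      exact Jeq.cut_left j.bwdFwd _
    exact (Jeq.pair_congr h1 h2).trans (Jeq.eta_prod _).symm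
  fwdBwd := by
    set F : Tm [Ty.prod A' B'] (Ty.prod A B) :=
      .pair (i.bwd.cut (.fst (.var .vz))) (j.bwd.cut (.snd (.var .vz))) with hF
    have e : (Tm.pair (i.fwd.cut (.fst (.var .vz))) (j.fwd.cut (.snd (.var .vz)))).cut F
        = Tm.pair (i.fwd.cut (.fst F)) (j.fwd.cut (.snd F)) := by
      show Tm.pair ((i.fwd.cut (.fst (.var .vz))).subst (Sub.one F))
          ((j.fwd.cut (.snd (.var .vz))).subst (Sub.one F)) = _
      rw [Tm.subst_cut, Tm.subst_cut]
      rfl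
    rw [e]
    have h1 : Jeq (i.fwd.cut (.fst F)) (.fst (.var .vz)) := by
      refine Jeq.trans (Jeq.cut_right _ (Jeq.beta_fst _ _)) ?_
      rw [Tm.cut_cut]
      exact Jeq.cut_left i.fwdBwd _
    have h2 : Jeq (j.fwd.cut (.snd F)) (.snd (.var .vz)) := by
      refine Jeq.trans (Jeq.cut_right _ (Jeq.beta_snd _ _)) ?_
      rw [Tm.cut_cut]
      exact Jeq.cut_left j.fwdBwd _
    exact (Jeq.pair_congr h1 h2).trans (Jeq.eta_prod _).symm

def IsoH.congrSum {A A' B B'} (i : IsoH A A') (j : IsoH B B') :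
    IsoH (.sum A B) (.sum A' B') where
  fwd := .case (.var .vz) (.inl (i.fwd.cut (.var .vz))) (.inr (j.fwd.cut (.var .vz)))
  bwd := .case (.var .vz) (.inl (i.bwd.cut (.var .vz))) (.inr (j.bwd.cut (.var .vz)))
  bwdFwd := by
    set G : Tm [Ty.sum A' B'] (Ty.sum A B) :=
      .case (.var .vz) (.inl (i.bwd.cut (.var .vz))) (.inr (j.bwd.cut (.var .vz))) with hG
    refine Jeq.trans (Jeq.cut_case G (.var .vz)
        (.inl (i.fwd.cut (.var .vz))) (.inr (j.fwd.cut (.var .vz)))) ?_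
    have h1 : Jeq (G.cut (.inl (i.fwd.cut (.var .vz))))
        (.inl (.var (Γ := A :: [Ty.sum A B]) .vz)) := by
      have e : G.cut (.inl (i.fwd.cut (.var (Γ := A :: [Ty.sum A B]) .vz)))
          = Tm.case (.inl (i.fwd.cut (.var .vz)))
              (.inl (i.bwd.cut (.var .vz))) (.inr (j.bwd.cut (.var .vz))) := by
        show Tm.case (.inl (i.fwd.cut (.var .vz)))
            ((Tm.inl (i.bwd.cut (.var .vz))).subst _)
            ((Tm.inr (j.bwd.cut (.var .vz))).subst _) = _
        show Tm.case (.inl (i.fwd.cut (.var .vz)))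
            (.inl ((i.bwd.cut (.var .vz)).subst _))
            (.inr ((j.bwd.cut (.var .vz)).subst _)) = _
        rw [Tm.subst_cut, Tm.subst_cut]
        rfl
      rw [e]
      refine Jeq.trans (Jeq.beta_inl _ _ _) ?_
      show Jeq (Tm.inl ((i.bwd.cut (.var .vz)).subst1 (i.fwd.cut (.var .vz)))) _
      unfold Tm.subst1
      rw [Tm.subst_cut]
      show Jeq (Tm.inl (i.bwd.cut (i.fwd.cut (.var .vz)))) _
      rw [Tm.cut_cut]
      exact Jeq.inl_congr (Jeq.cut_left i.bwdFwd _)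
    have h2 : Jeq (G.cut (.inr (j.fwd.cut (.var .vz))))
        (.inr (.var (Γ := B :: [Ty.sum A B]) .vz)) := by
      have e : G.cut (.inr (j.fwd.cut (.var (Γ := B :: [Ty.sum A B]) .vz)))
          = Tm.case (.inr (j.fwd.cut (.var .vz)))
              (.inl (i.bwd.cut (.var .vz))) (.inr (j.bwd.cut (.var .vz))) := by
        show Tm.case (.inr (j.fwd.cut (.var .vz)))
            (.inl ((i.bwd.cut (.var .vz)).subst _))
            (.inr ((j.bwd.cut (.var .vz)).subst _)) = _
        rw [Tm.subst_cut, Tm.subst_cut]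
        rfl
      rw [e]
      refine Jeq.trans (Jeq.beta_inr _ _ _) ?_
      show Jeq (Tm.inr ((j.bwd.cut (.var .vz)).subst1 (j.fwd.cut (.var .vz)))) _
      unfold Tm.subst1
      rw [Tm.subst_cut]
      show Jeq (Tm.inr (j.bwd.cut (j.fwd.cut (.var .vz)))) _
      rw [Tm.cut_cut]
      exact Jeq.inr_congr (Jeq.cut_left j.bwdFwd _)
    exact (Jeq.case_congr (Jeq.refl _) h1 h2).trans (Jeq.case_eta _).symm
  fwdBwd := by
    set G : Tm [Ty.sum A B] (Ty.sum A' B') :=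
      .case (.var .vz) (.inl (i.fwd.cut (.var .vz))) (.inr (j.fwd.cut (.var .vz))) with hG
    refine Jeq.trans (Jeq.cut_case G (.var .vz)
        (.inl (i.bwd.cut (.var .vz))) (.inr (j.bwd.cut (.var .vz)))) ?_
    have h1 : Jeq (G.cut (.inl (i.bwd.cut (.var .vz))))
        (.inl (.var (Γ := A' :: [Ty.sum A' B']) .vz)) := by
      have e : G.cut (.inl (i.bwd.cut (.var (Γ := A' :: [Ty.sum A' B']) .vz)))
          = Tm.case (.inl (i.bwd.cut (.var .vz)))
              (.inl (i.fwd.cut (.var .vz))) (.inr (j.fwd.cut (.var .vz))) := by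
        show Tm.case (.inl (i.bwd.cut (.var .vz)))
            (.inl ((i.fwd.cut (.var .vz)).subst _))
            (.inr ((j.fwd.cut (.var .vz)).subst _)) = _
        rw [Tm.subst_cut, Tm.subst_cut]
        rfl
      rw [e]
      refine Jeq.trans (Jeq.beta_inl _ _ _) ?_
      show Jeq (Tm.inl ((i.fwd.cut (.var .vz)).subst1 (i.bwd.cut (.var .vz)))) _
      unfold Tm.subst1
      rw [Tm.subst_cut]
      show Jeq (Tm.inl (i.fwd.cut (i.bwd.cut (.var .vz)))) _
      rw [Tm.cut_cut]
      exact Jeq.inl_congr (Jeq.cut_left i.fwdBwd _)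
    have h2 : Jeq (G.cut (.inr (j.bwd.cut (.var .vz))))
        (.inr (.var (Γ := B' :: [Ty.sum A' B']) .vz)) := by
      have e : G.cut (.inr (j.bwd.cut (.var (Γ := B' :: [Ty.sum A' B']) .vz)))
          = Tm.case (.inr (j.bwd.cut (.var .vz)))
              (.inl (i.fwd.cut (.var .vz))) (.inr (j.fwd.cut (.var .vz))) := by
        show Tm.case (.inr (j.bwd.cut (.var .vz)))
            (.inl ((i.fwd.cut (.var .vz)).subst _))
            (.inr ((j.fwd.cut (.var .vz)).subst _)) = _
        rw [Tm.subst_cut, Tm.subst_cut]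
        rfl
      rw [e]
      refine Jeq.trans (Jeq.beta_inr _ _ _) ?_
      show Jeq (Tm.inr ((j.fwd.cut (.var .vz)).subst1 (j.bwd.cut (.var .vz)))) _
      unfold Tm.subst1
      rw [Tm.subst_cut]
      show Jeq (Tm.inr (j.fwd.cut (j.bwd.cut (.var .vz)))) _
      rw [Tm.cut_cut]
      exact Jeq.inr_congr (Jeq.cut_left j.fwdBwd _)
    exact (Jeq.case_congr (Jeq.refl _) h1 h2).trans (Jeq.case_eta _).symm

def IsoH.congrArr {A A' B B'} (i : IsoH A A') (j : IsoH B B') :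
    IsoH (.arr A B) (.arr A' B') where
  fwd := .lam (j.fwd.cut (.app (.var (.vs .vz)) (i.bwd.cut (.var .vz))))
  bwd := .lam (j.bwd.cut (.app (.var (.vs .vz)) (i.fwd.cut (.var .vz))))
  bwdFwd := by
    set F : Tm [Ty.arr A B] (Ty.arr A' B') :=
      .lam (j.fwd.cut (.app (.var (.vs .vz)) (i.bwd.cut (.var .vz)))) with hF
    have e : (Tm.lam (j.bwd.cut (.app (.var (.vs .vz)) (i.fwd.cut (.var .vz))))).cut F
        = Tm.lam (j.bwd.cut (.app (Tm.wk F) (i.fwd.cut (.var .vz)))) := by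
      show Tm.lam ((j.bwd.cut (.app (.var (.vs .vz)) (i.fwd.cut (.var .vz)))).subst
          (Sub.lift (Sub.one F))) = _
      rw [Tm.subst_cut]
      show Tm.lam (j.bwd.cut (.app (Tm.wk F)
          ((i.fwd.cut (.var .vz)).subst (Sub.lift (Sub.one F))))) = _
      rw [Tm.subst_cut]
      rfl
    rw [e]
    have ewk : Tm.wk (B := A) F
        = .lam (j.fwd.cut (.app (.var (.vs (.vs .vz))) (i.bwd.cut (.var .vz)))) := by
      show Tm.lam ((j.fwd.cut (.app (.var (.vs .vz)) (i.bwd.cut (.var .vz)))).rename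
          (Ren.lift fun _ v => .vs v)) = _
      rw [Tm.rename_cut]
      show Tm.lam (j.fwd.cut (.app (.var (.vs (.vs .vz)))
          ((i.bwd.cut (.var .vz)).rename (Ren.lift fun _ v => .vs v)))) = _
      rw [Tm.rename_cut]
      rfl
    rw [ewk]
    refine Jeq.trans (Jeq.lam_congr (Jeq.cut_right _ (Jeq.beta_arr _ _))) ?_
    have e2 : (j.fwd.cut (.app (.var (Γ := A' :: A :: [Ty.arr A B]) (.vs (.vs .vz)))
          (i.bwd.cut (.var .vz)))).subst1 (i.fwd.cut (.var .vz))
        = j.fwd.cut (.app (.var (.vs .vz)) (i.bwd.cut (i.fwd.cut (.var .vz)))) := by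
      unfold Tm.subst1
      rw [Tm.subst_cut]
      show j.fwd.cut (.app (.var (.vs .vz))
          ((i.bwd.cut (.var .vz)).subst (Sub.single (i.fwd.cut (.var .vz))))) = _
      rw [Tm.subst_cut]
      rfl
    rw [e2]
    have h1 : Jeq (i.bwd.cut (i.fwd.cut (.var (Γ := A :: [Ty.arr A B]) .vz))) (.var .vz) := by
      rw [Tm.cut_cut]
      exact Jeq.cut_left i.bwdFwd _
    refine Jeq.trans (Jeq.lam_congr (Jeq.cut_right j.bwd (Jeq.cut_right j.fwd
        (Jeq.app_congr (Jeq.refl _) h1)))) ?_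
    have h2 : Jeq (j.bwd.cut (j.fwd.cut (Tm.app (Γ := A :: [Ty.arr A B])
        (.var (.vs .vz)) (.var .vz)))) (.app (.var (.vs .vz)) (.var .vz)) := by
      rw [Tm.cut_cut]
      exact Jeq.cut_left j.bwdFwd _
    exact (Jeq.lam_congr h2).trans Jeq.eta_arr_var.symm
  fwdBwd := by
    set F : Tm [Ty.arr A' B'] (Ty.arr A B) :=
      .lam (j.bwd.cut (.app (.var (.vs .vz)) (i.fwd.cut (.var .vz)))) with hF
    have e : (Tm.lam (j.fwd.cut (.app (.var (.vs .vz)) (i.bwd.cut (.var .vz))))).cut F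
        = Tm.lam (j.fwd.cut (.app (Tm.wk F) (i.bwd.cut (.var .vz)))) := by
      show Tm.lam ((j.fwd.cut (.app (.var (.vs .vz)) (i.bwd.cut (.var .vz)))).subst
          (Sub.lift (Sub.one F))) = _
      rw [Tm.subst_cut]
      show Tm.lam (j.fwd.cut (.app (Tm.wk F)
          ((i.bwd.cut (.var .vz)).subst (Sub.lift (Sub.one F))))) = _
      rw [Tm.subst_cut]
      rfl
    rw [e]
    have ewk : Tm.wk (B := A') F
        = .lam (j.bwd.cut (.app (.var (.vs (.vs .vz))) (i.fwd.cut (.var .vz)))) := by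
      show Tm.lam ((j.bwd.cut (.app (.var (.vs .vz)) (i.fwd.cut (.var .vz)))).rename
          (Ren.lift fun _ v => .vs v)) = _
      rw [Tm.rename_cut]
      show Tm.lam (j.bwd.cut (.app (.var (.vs (.vs .vz)))
          ((i.fwd.cut (.var .vz)).rename (Ren.lift fun _ v => .vs v)))) = _
      rw [Tm.rename_cut]
      rfl
    rw [ewk]
    refine Jeq.trans (Jeq.lam_congr (Jeq.cut_right _ (Jeq.beta_arr _ _))) ?_
    have e2 : (j.bwd.cut (.app (.var (Γ := A :: A' :: [Ty.arr A' B']) (.vs (.vs .vz)))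
          (i.fwd.cut (.var .vz)))).subst1 (i.bwd.cut (.var .vz))
        = j.bwd.cut (.app (.var (.vs .vz)) (i.fwd.cut (i.bwd.cut (.var .vz)))) := by
      unfold Tm.subst1
      rw [Tm.subst_cut]
      show j.bwd.cut (.app (.var (.vs .vz))
          ((i.fwd.cut (.var .vz)).subst (Sub.single (i.bwd.cut (.var .vz))))) = _
      rw [Tm.subst_cut]
      rfl
    rw [e2]
    have h1 : Jeq (i.fwd.cut (i.bwd.cut (.var (Γ := A' :: [Ty.arr A' B']) .vz))) (.var .vz) := by
      rw [Tm.cut_cut]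
      exact Jeq.cut_left i.fwdBwd _
    refine Jeq.trans (Jeq.lam_congr (Jeq.cut_right j.fwd (Jeq.cut_right j.bwd
        (Jeq.app_congr (Jeq.refl _) h1)))) ?_
    have h2 : Jeq (j.fwd.cut (j.bwd.cut (Tm.app (Γ := A' :: [Ty.arr A' B'])
        (.var (.vs .vz)) (.var .vz)))) (.app (.var (.vs .vz)) (.var .vz)) := by
      rw [Tm.cut_cut]
      exact Jeq.cut_left j.fwdBwd _
    exact (Jeq.lam_congr h2).trans Jeq.eta_arr_var.symm

theorem Tm.subst1_wk {Γ A B} (t : Tm Γ B) (m : Tm Γ A) : (Tm.wk (B := A) t).subst1 m = t := by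
  unfold Tm.wk Tm.subst1
  erw [Tm.subst_rename]
  have : (fun (C : Ty) (x : Var Γ C) => Sub.single m C (Var.vs x))
      = fun C x => Tm.var x := by
    funext C x; rfl
  rw [this, Tm.subst_var]

def IsoH.sumAssoc (A B C : Ty) : IsoH (.sum (.sum A B) C) (.sum A (.sum B C)) where
  fwd := .case (.var .vz)
      (.case (.var .vz) (.inl (.var .vz)) (.inr (.inl (.var .vz))))
      (.inr (.inr (.var .vz)))
  bwd := .case (.var .vz)
      (.inl (.inl (.var .vz)))
      (.case (.var .vz) (.inl (.inr (.var .vz))) (.inr (.var .vz)))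
  bwdFwd := by
    set G : Tm [Ty.sum A (.sum B C)] (Ty.sum (.sum A B) C) :=
      .case (.var .vz)
        (.inl (.inl (.var .vz)))
        (.case (.var .vz) (.inl (.inr (.var .vz))) (.inr (.var .vz))) with hG
    refine Jeq.trans (Jeq.cut_case G (.var .vz)
        (.case (.var .vz) (.inl (.var .vz)) (.inr (.inl (.var .vz))))
        (.inr (.inr (.var .vz)))) ?_
    have h1 : Jeq (G.cut (Tm.case (Γ := Ty.sum A B :: [Ty.sum (.sum A B) C]) (.var .vz)
          (.inl (.var .vz)) (.inr (.inl (.var .vz)))))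
        (.inl (.var .vz)) := by
      refine Jeq.trans (Jeq.cut_case G (.var .vz)
          (.inl (.var .vz)) (.inr (.inl (.var .vz)))) ?_
      have g1 : Jeq (G.cut (Tm.inl (Γ := A :: Ty.sum A B :: [Ty.sum (.sum A B) C])
            (.var .vz))) (.inl (.inl (.var .vz))) := by
        show Jeq (Tm.case (.inl (.var .vz)) (.inl (.inl (.var .vz)))
            (.case (.var .vz) (.inl (.inr (.var .vz))) (.inr (.var .vz)))) _
        exact Jeq.beta_inl _ _ _
      have g2 : Jeq (G.cut (Tm.inr (Γ := B :: Ty.sum A B :: [Ty.sum (.sum A B) C])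
            (.inl (.var .vz)))) (.inl (.inr (.var .vz))) := by
        show Jeq (Tm.case (.inr (.inl (.var .vz))) (.inl (.inl (.var .vz)))
            (.case (.var .vz) (.inl (.inr (.var .vz))) (.inr (.var .vz)))) _
        refine Jeq.trans (Jeq.beta_inr _ _ _) ?_
        show Jeq (Tm.case (.inl (.var .vz)) (.inl (.inr (.var .vz))) (.inr (.var .vz))) _
        exact Jeq.beta_inl _ _ _
      refine Jeq.trans (Jeq.case_congr (Jeq.refl _) g1 g2) ?_
      refine Jeq.symm ?_
      refine Jeq.trans (Jeq.inl_congr (Jeq.case_eta (.var .vz))) ?_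
      exact Jeq.subst1_case
        (Tm.inl (Γ := Ty.sum A B :: Ty.sum A B :: [Ty.sum (.sum A B) C])
          (B := C) (.var .vz))
        (.var .vz) (.inl (.var .vz)) (.inr (.var .vz))
    have h2 : Jeq (G.cut (Tm.inr (Γ := C :: [Ty.sum (.sum A B) C])
          (.inr (.var .vz)))) (.inr (.var .vz)) := by
      show Jeq (Tm.case (.inr (.inr (.var .vz))) (.inl (.inl (.var .vz)))
          (.case (.var .vz) (.inl (.inr (.var .vz))) (.inr (.var .vz)))) _
      refine Jeq.trans (Jeq.beta_inr _ _ _) ?_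
      show Jeq (Tm.case (.inr (.var .vz)) (.inl (.inr (.var .vz))) (.inr (.var .vz))) _
      exact Jeq.beta_inr _ _ _
    exact (Jeq.case_congr (Jeq.refl _) h1 h2).trans (Jeq.case_eta _).symm
  fwdBwd := by
    set G : Tm [Ty.sum (.sum A B) C] (Ty.sum A (.sum B C)) :=
      .case (.var .vz)
        (.case (.var .vz) (.inl (.var .vz)) (.inr (.inl (.var .vz))))
        (.inr (.inr (.var .vz))) with hG
    refine Jeq.trans (Jeq.cut_case G (.var .vz)
        (.inl (.inl (.var .vz)))
        (.case (.var .vz) (.inl (.inr (.var .vz))) (.inr (.var .vz)))) ?_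
    have h1 : Jeq (G.cut (Tm.inl (Γ := A :: [Ty.sum A (.sum B C)])
          (.inl (.var .vz)))) (.inl (.var .vz)) := by
      show Jeq (Tm.case (.inl (.inl (.var .vz)))
          (.case (.var .vz) (.inl (.var .vz)) (.inr (.inl (.var .vz))))
          (.inr (.inr (.var .vz)))) _
      refine Jeq.trans (Jeq.beta_inl _ _ _) ?_
      show Jeq (Tm.case (.inl (.var .vz)) (.inl (.var .vz)) (.inr (.inl (.var .vz)))) _
      exact Jeq.beta_inl _ _ _
    have h2 : Jeq (G.cut (Tm.case (Γ := Ty.sum B C :: [Ty.sum A (.sum B C)]) (.var .vz)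
          (.inl (.inr (.var .vz))) (.inr (.var .vz))))
        (.inr (.var .vz)) := by
      refine Jeq.trans (Jeq.cut_case G (.var .vz)
          (.inl (.inr (.var .vz))) (.inr (.var .vz))) ?_
      have g1 : Jeq (G.cut (Tm.inl (Γ := B :: Ty.sum B C :: [Ty.sum A (.sum B C)])
            (.inr (.var .vz)))) (.inr (.inl (.var .vz))) := by
        show Jeq (Tm.case (.inl (.inr (.var .vz)))
            (.case (.var .vz) (.inl (.var .vz)) (.inr (.inl (.var .vz))))
            (.inr (.inr (.var .vz)))) _
        refine Jeq.trans (Jeq.beta_inl _ _ _) ?_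
        show Jeq (Tm.case (.inr (.var .vz)) (.inl (.var .vz)) (.inr (.inl (.var .vz)))) _
        exact Jeq.beta_inr _ _ _
      have g2 : Jeq (G.cut (Tm.inr (Γ := C :: Ty.sum B C :: [Ty.sum A (.sum B C)])
            (.var .vz))) (.inr (.inr (.var .vz))) := by
        show Jeq (Tm.case (.inr (.var .vz))
            (.case (.var .vz) (.inl (.var .vz)) (.inr (.inl (.var .vz))))
            (.inr (.inr (.var .vz)))) _
        exact Jeq.beta_inr _ _ _
      refine Jeq.trans (Jeq.case_congr (Jeq.refl _) g1 g2) ?_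
      refine Jeq.symm ?_
      refine Jeq.trans (Jeq.inr_congr (Jeq.case_eta (.var .vz))) ?_
      exact Jeq.subst1_case
        (Tm.inr (Γ := Ty.sum B C :: Ty.sum B C :: [Ty.sum A (.sum B C)])
          (A := A) (.var .vz))
        (.var .vz) (.inl (.var .vz)) (.inr (.var .vz))
    exact (Jeq.case_congr (Jeq.refl _) h1 h2).trans (Jeq.case_eta _).symm

def IsoH.distribL (A B C : Ty) :
    IsoH (.prod A (.sum B C)) (.sum (.prod A B) (.prod A C)) where
  fwd := .case (.snd (.var .vz))
      (.inl (.pair (.fst (.var (.vs .vz))) (.var .vz)))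
      (.inr (.pair (.fst (.var (.vs .vz))) (.var .vz)))
  bwd := .case (.var .vz)
      (.pair (.fst (.var .vz)) (.inl (.snd (.var .vz))))
      (.pair (.fst (.var .vz)) (.inr (.snd (.var .vz))))
  bwdFwd := by
    set G : Tm [Ty.sum (.prod A B) (.prod A C)] (Ty.prod A (.sum B C)) :=
      .case (.var .vz)
        (.pair (.fst (.var .vz)) (.inl (.snd (.var .vz))))
        (.pair (.fst (.var .vz)) (.inr (.snd (.var .vz)))) with hG
    refine Jeq.trans (Jeq.cut_case G (.snd (.var .vz))
        (.inl (.pair (.fst (.var (.vs .vz))) (.var .vz)))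
        (.inr (.pair (.fst (.var (.vs .vz))) (.var .vz)))) ?_
    have h1 : Jeq (G.cut (Tm.inl (Γ := B :: [Ty.prod A (.sum B C)])
          (.pair (.fst (.var (.vs .vz))) (.var .vz))))
        (.pair (.fst (.var (.vs .vz))) (.inl (.var .vz))) := by
      show Jeq (Tm.case (.inl (.pair (.fst (.var (.vs .vz))) (.var .vz)))
          (.pair (.fst (.var .vz)) (.inl (.snd (.var .vz))))
          (.pair (.fst (.var .vz)) (.inr (.snd (.var .vz))))) _
      refine Jeq.trans (Jeq.beta_inl _ _ _) ?_
      show Jeq (Tm.pair (.fst (.pair (.fst (.var (.vs .vz))) (.var .vz)))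
          (.inl (.snd (.pair (.fst (.var (.vs .vz))) (.var .vz))))) _
      exact Jeq.pair_congr (Jeq.beta_fst _ _) (Jeq.inl_congr (Jeq.beta_snd _ _))
    have h2 : Jeq (G.cut (Tm.inr (Γ := C :: [Ty.prod A (.sum B C)])
          (.pair (.fst (.var (.vs .vz))) (.var .vz))))
        (.pair (.fst (.var (.vs .vz))) (.inr (.var .vz))) := by
      show Jeq (Tm.case (.inr (.pair (.fst (.var (.vs .vz))) (.var .vz)))
          (.pair (.fst (.var .vz)) (.inl (.snd (.var .vz))))
          (.pair (.fst (.var .vz)) (.inr (.snd (.var .vz))))) _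
      refine Jeq.trans (Jeq.beta_inr _ _ _) ?_
      show Jeq (Tm.pair (.fst (.pair (.fst (.var (.vs .vz))) (.var .vz)))
          (.inr (.snd (.pair (.fst (.var (.vs .vz))) (.var .vz))))) _
      exact Jeq.pair_congr (Jeq.beta_fst _ _) (Jeq.inr_congr (Jeq.beta_snd _ _))
    refine Jeq.trans (Jeq.case_congr (Jeq.refl _) h1 h2) ?_
    refine Jeq.symm ?_
    refine Jeq.trans (Jeq.eta_prod _) ?_
    refine Jeq.trans (Jeq.pair_congr (Jeq.refl _) (Jeq.case_eta (.snd (.var .vz)))) ?_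
    exact Jeq.subst1_case
      (Tm.pair (Γ := Ty.sum B C :: [Ty.prod A (.sum B C)])
        (.fst (.var (.vs .vz))) (.var .vz))
      (.snd (.var .vz)) (.inl (.var .vz)) (.inr (.var .vz))
  fwdBwd := by
    set G : Tm [Ty.prod A (.sum B C)] (Ty.sum (.prod A B) (.prod A C)) :=
      .case (.snd (.var .vz))
        (.inl (.pair (.fst (.var (.vs .vz))) (.var .vz)))
        (.inr (.pair (.fst (.var (.vs .vz))) (.var .vz))) with hG
    refine Jeq.trans (Jeq.cut_case G (.var .vz)
        (.pair (.fst (.var .vz)) (.inl (.snd (.var .vz))))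
        (.pair (.fst (.var .vz)) (.inr (.snd (.var .vz))))) ?_
    have h1 : Jeq (G.cut (Tm.pair (Γ := Ty.prod A B :: [Ty.sum (.prod A B) (.prod A C)])
          (.fst (.var .vz)) (.inl (.snd (.var .vz)))))
        (.inl (.var .vz)) := by
      set u : Tm (Ty.prod A B :: [Ty.sum (.prod A B) (.prod A C)]) (Ty.prod A (.sum B C)) :=
        .pair (.fst (.var .vz)) (.inl (.snd (.var .vz))) with hu
      show Jeq (Tm.case (.snd u)
          (.inl (.pair (.fst (Tm.wk u)) (.var .vz)))
          (.inr (.pair (.fst (Tm.wk u)) (.var .vz)))) _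
      refine Jeq.trans (Jeq.case_congr (Jeq.beta_snd _ _) (Jeq.refl _) (Jeq.refl _)) ?_
      refine Jeq.trans (Jeq.beta_inl _ _ _) ?_
      show Jeq (Tm.inl (.pair (.fst ((Tm.wk u).subst1 (.snd (.var .vz)))) (.snd (.var .vz)))) _
      rw [Tm.subst1_wk]
      refine Jeq.trans (Jeq.inl_congr (Jeq.pair_congr
          (Jeq.fst_congr (Jeq.refl _)) (Jeq.refl _))) ?_
      rw [hu]
      refine Jeq.trans (Jeq.inl_congr (Jeq.pair_congr (Jeq.beta_fst _ _) (Jeq.refl _))) ?_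
      exact Jeq.inl_congr (Jeq.eta_prod _).symm
    have h2 : Jeq (G.cut (Tm.pair (Γ := Ty.prod A C :: [Ty.sum (.prod A B) (.prod A C)])
          (.fst (.var .vz)) (.inr (.snd (.var .vz)))))
        (.inr (.var .vz)) := by
      set u : Tm (Ty.prod A C :: [Ty.sum (.prod A B) (.prod A C)]) (Ty.prod A (.sum B C)) :=
        .pair (.fst (.var .vz)) (.inr (.snd (.var .vz))) with hu
      show Jeq (Tm.case (.snd u)
          (.inl (.pair (.fst (Tm.wk u)) (.var .vz)))
          (.inr (.pair (.fst (Tm.wk u)) (.var .vz)))) _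
      refine Jeq.trans (Jeq.case_congr (Jeq.beta_snd _ _) (Jeq.refl _) (Jeq.refl _)) ?_
      refine Jeq.trans (Jeq.beta_inr _ _ _) ?_
      show Jeq (Tm.inr (.pair (.fst ((Tm.wk u).subst1 (.snd (.var .vz)))) (.snd (.var .vz)))) _
      rw [Tm.subst1_wk]
      rw [hu]
      refine Jeq.trans (Jeq.inr_congr (Jeq.pair_congr (Jeq.beta_fst _ _) (Jeq.refl _))) ?_
      exact Jeq.inr_congr (Jeq.eta_prod _).symm
    exact (Jeq.case_congr (Jeq.refl _) h1 h2).trans (Jeq.case_eta _).symm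

def IsoH.distribR (A B C : Ty) :
    IsoH (.prod (.sum A B) C) (.sum (.prod A C) (.prod B C)) :=
  (IsoH.prodComm (.sum A B) C).trans ((IsoH.distribL C A B).trans
    (IsoH.congrSum (IsoH.prodComm C A) (IsoH.prodComm C B)))

/-! ### The structural isomorphisms for the exp-log normal form -/

def isoNplus1 : ∀ (d : DNF) (e : ENF), IsoH (.sum (tyD d) (tyE e)) (tyD (nplus1 d e))
  | .two c c0, .cnf c1 => IsoH.sumAssoc (tyC c) (tyC c0) (tyC c1)
  | .two c c0, .dnf d0 => IsoH.sumAssoc (tyC c) (tyC c0) (tyD d0)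
  | .dis c d0, e2 =>
      (IsoH.sumAssoc (tyC c) (tyD d0) (tyE e2)).trans
        (IsoH.congrSum (IsoH.refl _) (isoNplus1 d0 e2))

def isoNplus (e1 e2 : ENF) : IsoH (.sum (tyE e1) (tyE e2)) (tyD (nplus e1 e2)) :=
  match e1 with
  | .cnf a =>
      match e2 with
      | .cnf c => IsoH.refl _
      | .dnf d => IsoH.refl _
  | .dnf b => isoNplus1 b e2

def isoNtimes : ∀ (c1 c2 : CNF), IsoH (.prod (tyC c1) (tyC c2)) (tyC (ntimes c1 c2))
  | .top, c2 => IsoH.prodUnitL (tyC c2)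
  | .con c10 d c13, c2 =>
      (IsoH.prodAssoc _ _ _).trans (IsoH.congrProd (IsoH.refl _) (isoNtimes c13 c2))

theorem distrib0_dis (c c0 : CNF) (d0 : DNF) :
    distrib0 c (.dis c0 d0) = .dnf (nplus (.cnf (ntimes c c0)) (distrib0 c d0)) := by
  cases h : distrib0 c d0 with
  | cnf c1 => rw [distrib0.eq_def]; simp only [h]; rfl
  | dnf d1 => rw [distrib0.eq_def]; simp only [h]; rfl

def isoDistrib0 : ∀ (c : CNF) (d : DNF), IsoH (.prod (tyC c) (tyD d)) (tyE (distrib0 c d))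
  | c, .two c0 c1 =>
      (IsoH.distribL _ _ _).trans (IsoH.congrSum (isoNtimes c c0) (isoNtimes c c1))
  | c, .dis c0 d0 => by
      rw [distrib0_dis]
      exact (IsoH.distribL _ _ _).trans
        ((IsoH.congrSum (isoNtimes c c0) (isoDistrib0 c d0)).trans
          (isoNplus (.cnf (ntimes c c0)) (distrib0 c d0)))

def isoDistrib1 : ∀ (c : CNF) (e : ENF), IsoH (.prod (tyC c) (tyE e)) (tyE (distrib1 c e))
  | c, .cnf a => isoNtimes c a
  | c, .dnf b => isoDistrib0 c b

def isoDistribn : ∀ (d : DNF) (e : ENF), IsoH (.prod (tyD d) (tyE e)) (tyE (distribn d e))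
  | .two c c0, e2 =>
      (IsoH.distribR _ _ _).trans
        ((IsoH.congrSum (isoDistrib1 c e2) (isoDistrib1 c0 e2)).trans
          (isoNplus (distrib1 c e2) (distrib1 c0 e2)))
  | .dis c d0, e2 =>
      (IsoH.distribR _ _ _).trans
        ((IsoH.congrSum (isoDistrib1 c e2) (isoDistribn d0 e2)).trans
          (isoNplus (distrib1 c e2) (distribn d0 e2)))

def isoDistrib (e1 e2 : ENF) : IsoH (.prod (tyE e1) (tyE e2)) (tyE (distrib e1 e2)) :=
  match e1 with
  | .cnf a => isoDistrib1 a e2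
  | .dnf b => isoDistribn b e2

def isoExplog0 : ∀ (b : Base) (d : DNF), IsoH (.arr (tyD d) (tyB b)) (tyC (explog0 b d))
  | b, .two c1 c2 =>
      (IsoH.arrSum _ _ _).trans
        ((IsoH.congrProd (IsoH.prodUnitR _).symm (IsoH.prodUnitR _).symm).trans
          (isoNtimes (.con c1 b .top) (.con c2 b .top)))
  | b, .dis c d3 =>
      (IsoH.arrSum _ _ _).trans
        ((IsoH.congrProd (IsoH.prodUnitR _).symm (isoExplog0 b d3)).trans
          (isoNtimes (.con c b .top) (explog0 b d3)))

def isoExplog1 : ∀ (b : Base) (e : ENF), IsoH (.arr (tyE e) (tyB b)) (tyC (explog1 b e))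
  | _, .cnf _ => (IsoH.prodUnitR _).symm
  | b, .dnf d1 => isoExplog0 b d1

def isoEnf2cnf : ∀ (e : ENF), IsoH (tyE e) (tyC (enf2cnf e))
  | .cnf _ => IsoH.refl _
  | .dnf d => (IsoH.unitArr (tyD d)).symm.trans (IsoH.prodUnitR _).symm

def isoExplogn : ∀ (c : CNF) (e : ENF), IsoH (.arr (tyE e) (tyC c)) (tyC (explogn c e))
  | .top, e => IsoH.arrUnit (tyE e)
  | .con c1 d c2, e =>
      (IsoH.arrProd _ _ _).trans
        ((IsoH.congrProd
          ((IsoH.curry (tyE e) (tyC c1) (tyB d)).trans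
            ((IsoH.congrArr (isoDistrib1 c1 e) (IsoH.refl _)).trans
              (isoExplog1 d (distrib1 c1 e))))
          (isoExplogn c2 e)).trans
        (isoNtimes (explog1 d (distrib1 c1 e)) (explogn c2 e)))

def isoEnfH : ∀ (τ : Ty), IsoH τ (tyE (enf τ))
  | .atom p => (IsoH.unitArr (.atom p)).symm.trans (IsoH.prodUnitR _).symm
  | .unit => IsoH.refl _
  | .arr f0 f1 =>
      (IsoH.congrArr (isoEnfH f0) ((isoEnfH f1).trans (isoEnf2cnf (enf f1)))).trans
        (isoExplogn (enf2cnf (enf f1)) (enf f0))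
  | .prod f0 f1 =>
      (IsoH.congrProd (isoEnfH f0) (isoEnfH f1)).trans (isoDistrib (enf f0) (enf f1))
  | .sum f0 f1 =>
      (IsoH.congrSum (isoEnfH f0) (isoEnfH f1)).trans (isoNplus (enf f0) (enf f1))

/-- Every type is isomorphic to its exp-log normal form:
there are closed coercions in both directions whose compositions are
βη-equal to the identity. -/
theorem iso_enf (τ : Ty) : Iso τ (tyE (enf τ)) :=
  (isoEnfH τ).iso

end ExpLog
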